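/- arXiv:2108.05066 — 7 statements merged into one kernel-verified Lean document; each statement's English description precedes it below -/
import Mathlib

section
/- For any essentially bounded real random variable X with quantile function F_X^{-1} and U uniformly distributed on (0,1), the random variable Y = (F_X^{-1}(U) + F_X^{-1}(1-U))/2 satisfies ess-sup Y - ess-inf Y ≤ (ess-sup X - ess-inf X)/2. -/
open MeasureTheory ProbabilityTheory Filter
open scoped Classical

variable {Ω : Type*} [MeasurableSpace Ω]

/-- Left `s`-quantile (Value-at-Risk) of `X` under `μ`. -/
noncomputable def VaR (μ : Measure Ω) (X : Ω → ℝ) (s : ℝ) : ℝ :=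
  sInf {x : ℝ | s ≤ (μ {ω | X ω ≤ x}).toReal}

/-- Expected Shortfall at level `p`. -/
noncomputable def ES (μ : Measure Ω) (X : Ω → ℝ) (p : ℝ) : ℝ :=
  (1 - p)⁻¹ * ∫ s in Set.Ioo p 1, VaR μ X s

/-- `A` is a tail event of `X`. -/
def IsTailEvent (μ : Measure Ω) (X : Ω → ℝ) (A : Set Ω) : Prop :=
  MeasurableSet A ∧ 0 < μ A ∧ μ A < 1 ∧
    ∀ᵐ ω ∂μ.restrict A, ∀ᵐ ω' ∂μ.restrict Aᶜ, X ω' ≤ X ω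

/-- `A` is a `p`-tail event of `X`: a tail event with probability `1 - p`. -/
def IsPTailEvent (μ : Measure Ω) (p : ℝ) (X : Ω → ℝ) (A : Set Ω) : Prop :=
  IsTailEvent μ X A ∧ μ A = ENNReal.ofReal (1 - p)

/-- `(X, Y)` is `p`-concentrated: `X` and `Y` share a common `p`-tail event. -/
def PConcentrated (μ : Measure Ω) (p : ℝ) (X Y : Ω → ℝ) : Prop :=
  ∃ A, IsPTailEvent μ p X A ∧ IsPTailEvent μ p Y A

/-- For bounded `X` and `U` uniform on `(0,1)`,
`Y = (F_X⁻¹(U) + F_X⁻¹(1-U))/2` satisfies `L(Y) ≤ L(X)/2`. -/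
theorem stmt0 (μ : Measure Ω) [IsProbabilityMeasure μ]
    (X U : Ω → ℝ) (hX : MemLp X ⊤ μ) (hU : Measurable U)
    (hUd : μ.map U = volume.restrict (Set.Ioo 0 1))
    (Y : Ω → ℝ) (hY : Y = fun ω => (VaR μ X (U ω) + VaR μ X (1 - U ω)) / 2) :
    essSup Y μ - essInf Y μ ≤ (essSup X μ - essInf X μ) / 2 := by
  haveI : (ae μ).NeBot := ae_neBot.mpr (IsProbabilityMeasure.ne_zero μ)
  set a := essInf X μ with ha
  set b := essSup X μ with hb
  -- X is a.e. bounded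
  have hfin : eLpNormEssSup X μ ≠ ⊤ := by
    have h2 := hX.2
    rw [eLpNorm_exponent_top] at h2
    exact h2.ne
  set C := (eLpNormEssSup X μ).toReal with hCdef
  have hC : ∀ᵐ ω ∂μ, ‖X ω‖ ≤ C := by
    filter_upwards [enorm_ae_le_eLpNormEssSup X μ] with ω hω
    have := ENNReal.toReal_mono hfin hω
    simpa using this
  have hbddU : IsBoundedUnder (· ≤ ·) (ae μ) X :=
    isBoundedUnder_of_eventually_le (a := C)
      (hC.mono fun ω h => (le_abs_self _).trans (by rwa [Real.norm_eq_abs] at h))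
  have hbddL : IsBoundedUnder (· ≥ ·) (ae μ) X :=
    isBoundedUnder_of_eventually_ge (a := -C)
      (hC.mono fun ω h => by
        have := neg_abs_le (X ω)
        rw [Real.norm_eq_abs] at h
        linarith)
  have hXb : ∀ᵐ ω ∂μ, X ω ≤ b := ae_le_essSup hbddU
  have hXa : ∀ᵐ ω ∂μ, a ≤ X ω := ae_essInf_le hbddL
  -- membership of b in the VaR defining set
  have hbmem : ∀ s : ℝ, s ≤ 1 → s ≤ (μ {ω | X ω ≤ b}).toReal := by
    intro s hs
    have h1 : μ {ω | X ω ≤ b} = 1 := by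
      have : μ {ω | ¬ X ω ≤ b} = 0 := hXb
      have hcompl : {ω | X ω ≤ b} = {ω | ¬ X ω ≤ b}ᶜ := by
        ext ω; simp
      rw [hcompl, measure_compl₀ (NullMeasurableSet.of_null this) (measure_ne_top μ _),
        this, measure_univ, tsub_zero]
    rw [h1]
    simpa using hs
  -- a is a lower bound of the VaR defining set for s > 0
  have hlb : ∀ s : ℝ, 0 < s → ∀ x ∈ {x : ℝ | s ≤ (μ {ω | X ω ≤ x}).toReal}, a ≤ x := by
    intro s hs x hx
    by_contra hax
    push_neg at hax
    have h0 : μ {ω | X ω ≤ x} = 0 := by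
      refine measure_mono_null ?_ hXa
      intro ω hω
      simp only [Set.mem_setOf_eq] at *
      intro hax'
      have h2 : a ≤ X ω := hax'
      linarith
    simp only [Set.mem_setOf_eq, h0, ENNReal.toReal_zero] at hx
    linarith
  have hVaR_le : ∀ s : ℝ, 0 < s → s ≤ 1 → VaR μ X s ≤ b := by
    intro s hs0 hs1
    exact csInf_le ⟨a, hlb s hs0⟩ (hbmem s hs1)
  have hle_VaR : ∀ s : ℝ, 0 < s → s ≤ 1 → a ≤ VaR μ X s := by
    intro s hs0 hs1
    exact le_csInf ⟨b, hbmem s hs1⟩ (hlb s hs0)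
  have hmono : ∀ s t : ℝ, 0 < s → s ≤ t → t ≤ 1 → VaR μ X s ≤ VaR μ X t := by
    intro s t hs0 hst ht1
    unfold VaR
    exact csInf_le_csInf ⟨a, hlb s hs0⟩ ⟨b, hbmem t ht1⟩
      (fun x hx => le_trans hst hx)
  set m := VaR μ X (1/2) with hm
  -- a.e., U ω ∈ (0,1)
  have hUin : ∀ᵐ ω ∂μ, U ω ∈ Set.Ioo (0:ℝ) 1 := by
    have hmap : μ (U ⁻¹' Set.Ioo (0:ℝ) 1) = 1 := by
      have := Measure.map_apply (μ := μ) hU (measurableSet_Ioo (a := (0:ℝ)) (b := 1))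
      rw [hUd] at this
      rw [← this]
      simp [Measure.restrict_apply, Real.volume_Ioo]
    rw [ae_iff]
    have : {ω | ¬ U ω ∈ Set.Ioo (0:ℝ) 1} = (U ⁻¹' Set.Ioo (0:ℝ) 1)ᶜ := by
      ext ω; simp
    rw [this, measure_compl (hU measurableSet_Ioo) (measure_ne_top μ _), hmap,
      measure_univ, tsub_self]
  -- a.e. bounds on Y
  have hYub : ∀ᵐ ω ∂μ, Y ω ≤ (m + b) / 2 := by
    filter_upwards [hUin] with ω hω
    obtain ⟨h0, h1⟩ := hω
    rw [hY]
    dsimp only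
    rcases le_or_gt (U ω) (1/2) with h | h
    · have e1 : VaR μ X (U ω) ≤ m := hmono _ _ h0 h (by norm_num)
      have e2 : VaR μ X (1 - U ω) ≤ b := hVaR_le _ (by linarith) (by linarith)
      linarith
    · have e1 : VaR μ X (1 - U ω) ≤ m := hmono _ _ (by linarith) (by linarith) (by norm_num)
      have e2 : VaR μ X (U ω) ≤ b := hVaR_le _ h0 h1.le
      linarith
  have hYlb : ∀ᵐ ω ∂μ, (a + m) / 2 ≤ Y ω := by
    filter_upwards [hUin] with ω hω
    obtain ⟨h0, h1⟩ := hω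
    rw [hY]
    dsimp only
    rcases le_or_gt (U ω) (1/2) with h | h
    · have e1 : a ≤ VaR μ X (U ω) := hle_VaR _ h0 h1.le
      have e2 : m ≤ VaR μ X (1 - U ω) := hmono _ _ (by norm_num) (by linarith) (by linarith)
      linarith
    · have e1 : m ≤ VaR μ X (U ω) := hmono _ _ (by norm_num) h.le h1.le
      have e2 : a ≤ VaR μ X (1 - U ω) := hle_VaR _ (by linarith) (by linarith)
      linarith
  have hsup : essSup Y μ ≤ (m + b) / 2 :=
    limsup_le_of_le (isCoboundedUnder_le_of_eventually_le (ae μ) hYlb) hYub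
  have hinf : (a + m) / 2 ≤ essInf Y μ :=
    le_liminf_of_le (isCoboundedUnder_ge_of_eventually_le (ae μ) hYub) hYlb
  linarith
end

section
/- For X, Y ∈ L^1 sharing a common p-tail event A (i.e., (X,Y) is p-concentrated), ES_p(X+Y) = ES_p(X) + ES_p(Y). -/
open MeasureTheory ProbabilityTheory Filter
open scoped Classical Topology ENNReal

variable {Ω : Type*} [MeasurableSpace Ω]

/-- Separating level for a tail event. -/
lemma exists_sep (μ : Measure Ω) {X : Ω → ℝ} {A : Set Ω}
    (h1 : μ A ≠ 0) (h2 : μ Aᶜ ≠ 0)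
    (htail : ∀ᵐ ω ∂μ.restrict A, ∀ᵐ ω' ∂μ.restrict Aᶜ, X ω' ≤ X ω) :
    ∃ c : ℝ, (∀ᵐ ω' ∂μ.restrict Aᶜ, X ω' ≤ c) ∧ (∀ᵐ ω ∂μ.restrict A, c ≤ X ω) := by
  set T : Set ℝ := {t | ∀ᵐ ω' ∂μ.restrict Aᶜ, X ω' ≤ t} with hT
  have h1' : μ.restrict A A ≠ 0 := by rwa [Measure.restrict_apply_self]
  have h2' : μ.restrict Aᶜ Aᶜ ≠ 0 := by rwa [Measure.restrict_apply_self]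
  -- T is nonempty
  obtain ⟨ω₀, -, hω₀⟩ := Measure.exists_mem_of_measure_ne_zero_of_ae h1' (ae_restrict_of_ae htail)
  have hω₀' : (X ω₀) ∈ T := hω₀
  have hTne : T.Nonempty := ⟨X ω₀, hω₀'⟩
  -- T is bounded below
  have hbdd : BddBelow T := by
    have : ∃ n : ℕ, μ.restrict Aᶜ {ω | -(n:ℝ) ≤ X ω} ≠ 0 := by
      by_contra h
      push_neg at h
      have hU : (⋃ n : ℕ, {ω | -(n:ℝ) ≤ X ω}) = Set.univ := by
        ext ω; simp only [Set.mem_iUnion, Set.mem_setOf_eq, Set.mem_univ, iff_true]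
        obtain ⟨n, hn⟩ := exists_nat_ge (-(X ω))
        exact ⟨n, by linarith⟩
      have : μ.restrict Aᶜ (⋃ n : ℕ, {ω | -(n:ℝ) ≤ X ω}) = 0 := by
        refine le_antisymm (le_trans (measure_iUnion_le _) ?_) (zero_le)
        simp [h]
      rw [hU, Measure.restrict_apply_univ] at this
      exact h2 this
    obtain ⟨n, hn⟩ := this
    refine ⟨-(n:ℝ), fun t ht => ?_⟩
    obtain ⟨ω, hω, hle⟩ := Measure.exists_mem_of_measure_ne_zero_of_ae hn (ae_restrict_of_ae ht)
    exact le_trans hω hle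
  -- c := sInf T works
  refine ⟨sInf T, ?_, ?_⟩
  · have hseq : ∀ n : ℕ, ∃ t ∈ T, t < sInf T + 1/(n+1) := by
      intro n
      apply exists_lt_of_csInf_lt hTne
      have : (0:ℝ) < 1/(n+1) := by positivity
      linarith
    choose t ht htlt using hseq
    have hall : ∀ᵐ ω' ∂μ.restrict Aᶜ, ∀ n : ℕ, X ω' ≤ sInf T + 1/(n+1) := by
      rw [MeasureTheory.ae_all_iff]
      intro n
      filter_upwards [ht n] with ω' hω'
      exact le_of_lt (lt_of_le_of_lt hω' (htlt n))
    filter_upwards [hall] with ω' hω'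
    refine le_of_forall_pos_le_add fun ε hε => ?_
    obtain ⟨n, hn⟩ := exists_nat_one_div_lt hε
    exact le_trans (hω' n) (by linarith [hn])
  · filter_upwards [htail] with ω hω
    exact csInf_le hbdd hω

lemma key (μ : Measure Ω) [IsProbabilityMeasure μ] {p : ℝ} (hp : p ∈ Set.Ioo (0:ℝ) 1)
    {X : Ω → ℝ} (hXm : Measurable X) (hX : Integrable X μ) {A : Set Ω}
    (hAm : MeasurableSet A) (hAp : μ A = ENNReal.ofReal (1 - p))
    (htail : ∀ᵐ ω ∂μ.restrict A, ∀ᵐ ω' ∂μ.restrict Aᶜ, X ω' ≤ X ω) :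
    ∫ s in Set.Ioo p 1, VaR μ X s = ∫ ω in A, X ω ∂μ := by
  obtain ⟨hp0, hp1⟩ := hp
  set r : ℝ := 1 - p with hrdef
  have hr0 : 0 < r := by simp only [hrdef]; linarith
  have hr1 : r < 1 := by simp only [hrdef]; linarith
  have hμA : μ A = ENNReal.ofReal r := hAp
  have hμAc : μ Aᶜ = ENNReal.ofReal p := by
    rw [measure_compl hAm (measure_ne_top μ A), measure_univ, hμA]
    rw [← ENNReal.ofReal_one, ← ENNReal.ofReal_sub _ (by linarith : (0:ℝ) ≤ r)]
    norm_num [hrdef]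
  have hA0 : μ A ≠ 0 := by
    rw [hμA]; simp [ENNReal.ofReal_eq_zero]; linarith
  have hAc0 : μ Aᶜ ≠ 0 := by
    rw [hμAc]; simp [ENNReal.ofReal_eq_zero]; linarith
  obtain ⟨c, hc1, hc2⟩ := exists_sep μ hA0 hAc0 htail
  set ν : Measure Ω := μ.restrict A with hνdef
  have hνuniv : ν Set.univ = ENNReal.ofReal r := by
    rw [hνdef, Measure.restrict_apply_univ, hμA]
  have hmeas : ∀ x : ℝ, MeasurableSet {ω | X ω ≤ x} := fun x => hXm measurableSet_Iic
  set G : ℝ → ℝ := fun x => (ν {ω | X ω ≤ x}).toReal with hGdef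
  have hGmono : Monotone G := by
    intro x y hxy
    exact ENNReal.toReal_mono (measure_ne_top ν _)
      (measure_mono (fun ω hω => le_trans hω hxy))
  have hGnn : ∀ x, 0 ≤ G x := fun x => ENNReal.toReal_nonneg
  have hGler : ∀ x, G x ≤ r := by
    intro x
    rw [hGdef]
    calc (ν {ω | X ω ≤ x}).toReal ≤ (ν Set.univ).toReal :=
          ENNReal.toReal_mono (by rw [hνuniv]; exact ENNReal.ofReal_ne_top)
            (measure_mono (Set.subset_univ _))
      _ = r := by rw [hνuniv, ENNReal.toReal_ofReal (le_of_lt hr0)]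
  have hofRealG : ∀ x, ENNReal.ofReal (G x) = ν {ω | X ω ≤ x} := fun x =>
    ENNReal.ofReal_toReal (measure_ne_top ν _)
  -- for every t < r there is x with t ≤ G x
  have hGne : ∀ t : ℝ, t < r → ∃ x, t ≤ G x := by
    intro t ht
    have hmon : Monotone (fun n : ℕ => {ω | X ω ≤ (n:ℝ)}) := by
      intro m n hmn ω hω
      simp only [Set.mem_setOf_eq] at hω ⊢
      exact le_trans hω (by exact_mod_cast hmn)
    have hU : (⋃ n : ℕ, {ω | X ω ≤ (n:ℝ)}) = Set.univ := by
      ext ω; simp only [Set.mem_iUnion, Set.mem_setOf_eq, Set.mem_univ, iff_true]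
      obtain ⟨n, hn⟩ := exists_nat_ge (X ω)
      exact ⟨n, hn⟩
    have htend : Tendsto (fun n : ℕ => ν {ω | X ω ≤ (n:ℝ)}) atTop (𝓝 (ν Set.univ)) := by
      have := tendsto_measure_iUnion_atTop (μ := ν) hmon
      rwa [hU] at this
    have htend' : Tendsto (fun n : ℕ => G (n:ℝ)) atTop (𝓝 r) := by
      have h2 := (ENNReal.tendsto_toReal (by rw [hνuniv]; exact ENNReal.ofReal_ne_top)).comp htend
      simp only [Function.comp_def] at h2
      rwa [hνuniv, ENNReal.toReal_ofReal (le_of_lt hr0)] at h2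
    obtain ⟨n, hn⟩ := (htend'.eventually (eventually_ge_nhds ht)).exists
    exact ⟨n, hn⟩
  -- if G x ≥ t > 0 then c ≤ x
  have hclb : ∀ t x : ℝ, 0 < t → t ≤ G x → c ≤ x := by
    intro t x ht hGx
    have hne : ν {ω | X ω ≤ x} ≠ 0 := by
      intro h0
      rw [hGdef] at hGx
      simp only [h0, ENNReal.toReal_zero] at hGx
      linarith
    obtain ⟨ω, hω1, hω2⟩ := Measure.exists_mem_of_measure_ne_zero_of_ae hne
      (ae_restrict_of_ae hc2)
    exact le_trans hω2 hω1
  -- right continuity of G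
  have hGright : ∀ x : ℝ, Tendsto (fun n : ℕ => G (x + 1/(n+1))) atTop (𝓝 (G x)) := by
    intro x
    have hanti : Antitone (fun n : ℕ => {ω | X ω ≤ x + 1/(n+1)}) := by
      intro m n hmn ω hω
      simp only [Set.mem_setOf_eq] at hω ⊢
      refine le_trans hω ?_
      have : (1:ℝ)/(n+1) ≤ 1/(m+1) := by
        apply one_div_le_one_div_of_le (by positivity)
        exact_mod_cast add_le_add_left (Nat.cast_le.mpr hmn) 1
      linarith
    have hI : (⋂ n : ℕ, {ω | X ω ≤ x + 1/(n+1)}) = {ω | X ω ≤ x} := by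
      ext ω
      simp only [Set.mem_iInter, Set.mem_setOf_eq]
      constructor
      · intro h
        refine le_of_forall_pos_le_add fun ε hε => ?_
        obtain ⟨n, hn⟩ := exists_nat_one_div_lt hε
        exact le_trans (h n) (by linarith [hn])
      · intro h n
        have : (0:ℝ) < 1/(n+1) := by positivity
        linarith
    have htend := tendsto_measure_iInter_atTop (μ := ν)
      (fun n => (hmeas _).nullMeasurableSet) hanti ⟨0, measure_ne_top ν _⟩
    rw [hI] at htend
    have h2 := (ENNReal.tendsto_toReal (measure_ne_top ν _)).comp htend
    simpa [Function.comp_def] using h2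
  set q : ℝ → ℝ := fun t => sInf {x | t ≤ G x} with hqdef
  have hqbdd : ∀ t : ℝ, 0 < t → BddBelow {x | t ≤ G x} :=
    fun t ht => ⟨c, fun x hx => hclb t x ht hx⟩
  have hqne : ∀ t : ℝ, t < r → Set.Nonempty {x | t ≤ G x} := fun t ht => hGne t ht
  -- Galois connection
  have hgal : ∀ t ∈ Set.Ioo (0:ℝ) r, ∀ x : ℝ, q t ≤ x ↔ t ≤ G x := by
    intro t ht x
    constructor
    · intro h
      have hall : ∀ n : ℕ, t ≤ G (x + 1/(n+1)) := by
        intro n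
        have hlt : q t < x + 1/(n+1) := by
          have : (0:ℝ) < 1/(n+1) := by positivity
          linarith
        obtain ⟨y, hy, hylt⟩ := exists_lt_of_csInf_lt (hqne t ht.2) hlt
        exact le_trans hy (hGmono (le_of_lt hylt))
      exact ge_of_tendsto' (hGright x) hall
    · intro h
      exact csInf_le (hqbdd t ht.1) h
  have hqc : ∀ t ∈ Set.Ioo (0:ℝ) r, c ≤ q t := by
    intro t ht
    exact le_csInf (hqne t ht.2) (fun x hx => hclb t x ht.1 hx)
  have hqmono : MonotoneOn q (Set.Ioo (0:ℝ) r) := by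
    intro t₁ h₁ t₂ h₂ h12
    exact csInf_le_csInf (hqbdd t₁ h₁.1) (hqne t₂ h₂.2)
      (fun x hx => le_trans h12 hx)
  -- identification of VaR
  have hsplit : ∀ x : ℝ, μ {ω | X ω ≤ x} = μ ({ω | X ω ≤ x} ∩ Aᶜ) + ν {ω | X ω ≤ x} := by
    intro x
    rw [hνdef, Measure.restrict_apply (hmeas x)]
    rw [← measure_inter_add_diff {ω | X ω ≤ x} hAm.compl]
    congr 1
    rw [Set.diff_eq, compl_compl]
  have hVaR : ∀ s ∈ Set.Ioo p (1:ℝ), VaR μ X s = q (s - p) := by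
    intro s hs
    have hseteq : {x : ℝ | s ≤ (μ {ω | X ω ≤ x}).toReal} = {x | s - p ≤ G x} := by
      ext x
      simp only [Set.mem_setOf_eq]
      constructor
      · intro h
        have hle : (μ {ω | X ω ≤ x}).toReal ≤ p + G x := by
          rw [hsplit x, ENNReal.toReal_add (measure_ne_top μ _) (measure_ne_top ν _)]
          gcongr
          have : μ ({ω | X ω ≤ x} ∩ Aᶜ) ≤ μ Aᶜ := measure_mono Set.inter_subset_right
          calc (μ ({ω | X ω ≤ x} ∩ Aᶜ)).toReal ≤ (μ Aᶜ).toReal :=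
                ENNReal.toReal_mono (by rw [hμAc]; exact ENNReal.ofReal_ne_top) this
            _ = p := by rw [hμAc, ENNReal.toReal_ofReal (le_of_lt hp0)]
        linarith
      · intro h
        have hcx : c ≤ x := hclb (s - p) x (by linarith [hs.1]) h
        have hAceq : μ ({ω | X ω ≤ x} ∩ Aᶜ) = μ Aᶜ := by
          have h0 : μ.restrict Aᶜ {ω | X ω ≤ x}ᶜ = 0 := by
            have hae : ∀ᵐ ω ∂μ.restrict Aᶜ, X ω ≤ x :=
              hc1.mono fun ω hω => le_trans hω hcx
            rw [Set.compl_setOf]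
            exact ae_iff.mp hae
          have hkey := measure_inter_add_diff (μ := μ) Aᶜ (hmeas x)
          rw [Measure.restrict_apply (hmeas x).compl] at h0
          rw [Set.diff_eq, Set.inter_comm Aᶜ ({ω | X ω ≤ x}ᶜ), h0, add_zero] at hkey
          rw [Set.inter_comm]
          exact hkey
        have : (μ {ω | X ω ≤ x}).toReal = p + G x := by
          rw [hsplit x, ENNReal.toReal_add (measure_ne_top μ _) (measure_ne_top ν _),
            hAceq, hμAc, ENNReal.toReal_ofReal (le_of_lt hp0)]
        linarith
    rw [VaR, hseteq]
  -- the layercake identity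
  have hlayer : ∫ t in Set.Ioo (0:ℝ) r, q t = ∫ ω in A, X ω ∂μ := by
    have hqmeas : AEMeasurable q (volume.restrict (Set.Ioo (0:ℝ) r)) :=
      aemeasurable_restrict_of_monotoneOn measurableSet_Ioo hqmono
    have hfnn : 0 ≤ᵐ[volume.restrict (Set.Ioo (0:ℝ) r)] fun t => q t - c := by
      filter_upwards [ae_restrict_mem measurableSet_Ioo] with t ht
      have := hqc t ht
      simp only [Pi.zero_apply]
      linarith
    have hfm : AEMeasurable (fun t => q t - c) (volume.restrict (Set.Ioo (0:ℝ) r)) :=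
      hqmeas.sub aemeasurable_const
    have hXnn : 0 ≤ᵐ[ν] fun ω => X ω - c := by
      filter_upwards [hc2] with ω hω
      simp only [Pi.zero_apply]
      linarith
    have hXms : AEMeasurable (fun ω => X ω - c) ν := (hXm.sub measurable_const).aemeasurable
    have hXint : Integrable (fun ω => X ω - c) ν :=
      hX.restrict.sub (integrable_const c)
    have htails : ∀ u : ℝ, (volume.restrict (Set.Ioo (0:ℝ) r)) {t | u < q t - c}
        = ν {ω | u < X ω - c} := by
      intro u
      have hseteq : {t | u < q t - c} ∩ Set.Ioo (0:ℝ) r = Set.Ioo (G (c + u)) r := by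
        ext t
        simp only [Set.mem_inter_iff, Set.mem_setOf_eq, Set.mem_Ioo]
        constructor
        · rintro ⟨h1, h2, h3⟩
          refine ⟨?_, h3⟩
          by_contra hcon
          push_neg at hcon
          have := (hgal t ⟨h2, h3⟩ (c + u)).mpr hcon
          linarith
        · rintro ⟨h1, h2⟩
          have ht0 : 0 < t := lt_of_le_of_lt (hGnn (c + u)) h1
          have hnle : ¬ q t ≤ c + u := by
            intro hle
            have := (hgal t ⟨ht0, h2⟩ (c + u)).mp hle
            linarith
          push_neg at hnle
          exact ⟨by linarith, ht0, h2⟩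
      rw [Measure.restrict_apply' measurableSet_Ioo, hseteq, Real.volume_Ioo]
      have hXset : {ω | u < X ω - c} = {ω | X ω ≤ c + u}ᶜ := by
        ext ω
        simp only [Set.mem_setOf_eq, Set.mem_compl_iff, not_le]
        constructor <;> intro h <;> linarith
      rw [hXset, measure_compl (hmeas _) (measure_ne_top ν _), hνuniv, ← hofRealG]
      rw [← ENNReal.ofReal_sub _ (hGnn _)]
    have hL : ∫⁻ t in Set.Ioo (0:ℝ) r, ENNReal.ofReal (q t - c)
        = ∫⁻ ω, ENNReal.ofReal (X ω - c) ∂ν := by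
      rw [lintegral_eq_lintegral_meas_lt _ hfnn hfm,
        lintegral_eq_lintegral_meas_lt _ hXnn hXms]
      exact lintegral_congr (fun u => htails u)
    have hMfin : ∫⁻ ω, ENNReal.ofReal (X ω - c) ∂ν ≠ ∞ := hXint.lintegral_lt_top.ne
    have hqint : Integrable (fun t => q t - c) (volume.restrict (Set.Ioo (0:ℝ) r)) := by
      refine ⟨aestronglyMeasurable_iff_aemeasurable.mpr hfm, ?_⟩
      rw [hasFiniteIntegral_iff_ofReal hfnn, hL]
      exact hMfin.lt_top
    have h1 : ∫ t in Set.Ioo (0:ℝ) r, (q t - c)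
        = (∫⁻ t in Set.Ioo (0:ℝ) r, ENNReal.ofReal (q t - c)).toReal :=
      integral_eq_lintegral_of_nonneg_ae hfnn hqint.aestronglyMeasurable
    have h2 : ∫ ω, (X ω - c) ∂ν = (∫⁻ ω, ENNReal.ofReal (X ω - c) ∂ν).toReal :=
      integral_eq_lintegral_of_nonneg_ae hXnn hXint.aestronglyMeasurable
    have h3 : ∫ t in Set.Ioo (0:ℝ) r, (q t - c) = ∫ ω, (X ω - c) ∂ν := by
      rw [h1, h2, hL]
    have hcint : Integrable (fun _ : ℝ => c) (volume.restrict (Set.Ioo (0:ℝ) r)) := by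
      refine (integrableOn_const_iff (C := c)).mpr (Or.inr ?_)
      rw [Real.volume_Ioo]
      exact ENNReal.ofReal_lt_top
    have hvol : (volume (Set.Ioo (0:ℝ) r)).toReal = r := by
      rw [Real.volume_Ioo, ENNReal.toReal_ofReal (by linarith)]
      ring
    have e1 : ∫ t in Set.Ioo (0:ℝ) r, q t
        = (∫ t in Set.Ioo (0:ℝ) r, (q t - c)) + r * c := by
      have h4 := integral_add hqint hcint
      simp only [sub_add_cancel] at h4
      rw [h4, setIntegral_const, measureReal_def, hvol, smul_eq_mul]
    have e2 : ∫ ω in A, X ω ∂μ = (∫ ω, (X ω - c) ∂ν) + r * c := by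
      rw [integral_sub hX.restrict (integrable_const c)]
      rw [integral_const]
      rw [measureReal_def, Measure.restrict_apply_univ, hμA, ENNReal.toReal_ofReal (le_of_lt hr0), smul_eq_mul]
      ring
    rw [e1, e2, h3]
  -- change of variables
  calc ∫ s in Set.Ioo p 1, VaR μ X s = ∫ s in Set.Ioo p 1, q (s - p) := by
        apply setIntegral_congr_fun measurableSet_Ioo
        intro s hs; exact hVaR s hs
    _ = ∫ t in Set.Ioo (0:ℝ) r, q t := by
        rw [← MeasureTheory.integral_Ioc_eq_integral_Ioo,
          ← MeasureTheory.integral_Ioc_eq_integral_Ioo,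
          ← intervalIntegral.integral_of_le (le_of_lt hp1),
          ← intervalIntegral.integral_of_le (le_of_lt hr0)]
        have := intervalIntegral.integral_comp_sub_right (a := p) (b := 1) (fun t => q t) p
        rw [this]
        norm_num
        rfl
    _ = ∫ ω in A, X ω ∂μ := hlayer

/-- The key identity, for integrable `X` (not necessarily measurable). -/
lemma key' (μ : Measure Ω) [IsProbabilityMeasure μ] {p : ℝ} (hp : p ∈ Set.Ioo (0:ℝ) 1)
    {X : Ω → ℝ} (hX : Integrable X μ) {A : Set Ω}
    (hAm : MeasurableSet A) (hAp : μ A = ENNReal.ofReal (1 - p))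
    (htail : ∀ᵐ ω ∂μ.restrict A, ∀ᵐ ω' ∂μ.restrict Aᶜ, X ω' ≤ X ω) :
    ∫ s in Set.Ioo p 1, VaR μ X s = ∫ ω in A, X ω ∂μ := by
  obtain ⟨X', hX'm, hXX'⟩ := hX.aestronglyMeasurable
  have hX' : Integrable X' μ := hX.congr hXX'
  have hsets : ∀ x : ℝ, μ {ω | X ω ≤ x} = μ {ω | X' ω ≤ x} := fun x =>
    measure_congr (Filter.eventuallyEq_set.mpr (hXX'.mono fun ω h => by
      simp only [Set.mem_setOf_eq, h]))
  have hVaReq : VaR μ X = VaR μ X' := by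
    funext s
    unfold VaR
    simp only [hsets]
  have htail' : ∀ᵐ ω ∂μ.restrict A, ∀ᵐ ω' ∂μ.restrict Aᶜ, X' ω' ≤ X' ω := by
    filter_upwards [htail, ae_restrict_of_ae hXX'] with ω hω hωeq
    filter_upwards [hω, ae_restrict_of_ae hXX'] with ω' hω' hω'eq
    rw [← hωeq, ← hω'eq]
    exact hω'
  have hint : ∫ ω in A, X ω ∂μ = ∫ ω in A, X' ω ∂μ :=
    integral_congr_ae (ae_restrict_of_ae hXX')
  rw [hVaReq, hint]
  exact key μ hp hX'm.measurable hX' hAm hAp htail'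

/-- `ES_p` is additive on `p`-concentrated pairs. -/
theorem stmt4 (μ : Measure Ω) [IsProbabilityMeasure μ] (p : ℝ) (hp : p ∈ Set.Ioo (0:ℝ) 1)
    (X Y : Ω → ℝ) (hX : Integrable X μ) (hY : Integrable Y μ)
    (A : Set Ω) (hAX : IsPTailEvent μ p X A) (hAY : IsPTailEvent μ p Y A) :
    ES μ (X + Y) p = ES μ X p + ES μ Y p := by
  obtain ⟨⟨hAm, hA0, hA1, htailX⟩, hAp⟩ := hAX
  obtain ⟨⟨-, -, -, htailY⟩, -⟩ := hAY
  have htailXY : ∀ᵐ ω ∂μ.restrict A, ∀ᵐ ω' ∂μ.restrict Aᶜ, (X + Y) ω' ≤ (X + Y) ω := by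
    filter_upwards [htailX, htailY] with ω h1 h2
    filter_upwards [h1, h2] with ω' h1' h2'
    simp only [Pi.add_apply]
    exact add_le_add h1' h2'
  have kX := key' μ hp hX hAm hAp htailX
  have kY := key' μ hp hY hAm hAp htailY
  have kXY := key' μ hp (hX.add hY) hAm hAp htailXY
  have hadd : ∫ ω in A, (X + Y) ω ∂μ = (∫ ω in A, X ω ∂μ) + ∫ ω in A, Y ω ∂μ := by
    simp only [Pi.add_apply]
    exact integral_add hX.restrict hY.restrict
  unfold ES
  rw [kX, kY, kXY, hadd]
  ring
end

section
/- Let p ∈ (0,1) and let g : [0,∞) → ℝ be increasing with g(0) = 0 and satisfying |g(x)-g(y)| ≤ |x-y| for all x,y ≥ 0. Then the functional ρ(X) = g(ES_p(X) - E[X]) + E[X] on L^∞ is monotone: X ≤ Y almost surely implies ρ(X) ≤ ρ(Y). -/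
set_option linter.unusedVariables false
set_option linter.unusedSectionVars false


open MeasureTheory ProbabilityTheory Filter
open scoped Classical Topology

variable {Ω : Type*} [MeasurableSpace Ω]

section aux

variable (μ : Measure Ω) [IsProbabilityMeasure μ] {X : Ω → ℝ} {m M : ℝ}

lemma F_mono : Monotone fun x => (μ {ω | X ω ≤ x}).toReal := fun a b hab =>
  ENNReal.toReal_mono (measure_ne_top μ _) (measure_mono fun ω h => le_trans h hab)

lemma F_at_top (hM : ∀ᵐ ω ∂μ, X ω ≤ M) (x : ℝ) (hx : M ≤ x) :
    (μ {ω | X ω ≤ x}).toReal = 1 := by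
  have : {ω | X ω ≤ x} =ᵐ[μ] (Set.univ : Set Ω) := by
    filter_upwards [hM] with ω h
    simp only [eq_iff_iff, Set.mem_setOf_eq, iff_true]
    show X ω ≤ x ↔ True
    simp [le_trans h hx]
  rw [measure_congr this, measure_univ, ENNReal.toReal_one]

lemma F_at_bot (hm : ∀ᵐ ω ∂μ, m ≤ X ω) (x : ℝ) (hx : x < m) :
    (μ {ω | X ω ≤ x}).toReal = 0 := by
  have : μ {ω | X ω ≤ x} = 0 := by
    refine measure_mono_null (fun ω h => ?_) (ae_iff.1 hm)
    exact not_le.2 (lt_of_le_of_lt h hx)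
  simp [this]

lemma VaR_set_bddBelow (hm : ∀ᵐ ω ∂μ, m ≤ X ω) {s : ℝ} (hs : 0 < s) :
    BddBelow {x : ℝ | s ≤ (μ {ω | X ω ≤ x}).toReal} := by
  refine ⟨m, fun x hx => ?_⟩
  by_contra hc
  rw [Set.mem_setOf_eq, F_at_bot μ hm x (not_le.1 hc)] at hx
  exact absurd (lt_of_lt_of_le hs hx) (lt_irrefl 0)

lemma VaR_set_nonempty (hM : ∀ᵐ ω ∂μ, X ω ≤ M) {s : ℝ} (hs : s ≤ 1) :
    M ∈ {x : ℝ | s ≤ (μ {ω | X ω ≤ x}).toReal} := by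
  simp only [Set.mem_setOf_eq, F_at_top μ hM M le_rfl]; exact hs

lemma VaR_le (hm : ∀ᵐ ω ∂μ, m ≤ X ω) (hM : ∀ᵐ ω ∂μ, X ω ≤ M)
    {s : ℝ} (hs0 : 0 < s) (hs1 : s ≤ 1) : VaR μ X s ≤ M :=
  csInf_le (VaR_set_bddBelow μ hm hs0) (VaR_set_nonempty μ hM hs1)

lemma le_VaR (hm : ∀ᵐ ω ∂μ, m ≤ X ω) (hM : ∀ᵐ ω ∂μ, X ω ≤ M)
    {s : ℝ} (hs0 : 0 < s) (hs1 : s ≤ 1) : m ≤ VaR μ X s := by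
  refine le_csInf ⟨M, VaR_set_nonempty μ hM hs1⟩ (fun x hx => ?_)
  by_contra hc
  rw [Set.mem_setOf_eq, F_at_bot μ hm x (not_le.1 hc)] at hx
  exact absurd (lt_of_lt_of_le hs0 hx) (lt_irrefl 0)

lemma VaR_mono_s (hm : ∀ᵐ ω ∂μ, m ≤ X ω) (hM : ∀ᵐ ω ∂μ, X ω ≤ M) :
    MonotoneOn (VaR μ X) (Set.Ioc 0 1) := by
  intro a ha b hb hab
  refine csInf_le_csInf (VaR_set_bddBelow μ hm ha.1) ⟨M, VaR_set_nonempty μ hM hb.2⟩ ?_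
  intro x hx
  exact le_trans hab hx

lemma VaR_mono_X {Y : Ω → ℝ} (hm : ∀ᵐ ω ∂μ, m ≤ X ω) (hMY : ∀ᵐ ω ∂μ, Y ω ≤ M)
    (hXY : ∀ᵐ ω ∂μ, X ω ≤ Y ω) {s : ℝ} (hs0 : 0 < s) (hs1 : s ≤ 1) :
    VaR μ X s ≤ VaR μ Y s := by
  refine csInf_le_csInf (VaR_set_bddBelow μ hm hs0) ⟨M, VaR_set_nonempty μ hMY hs1⟩ ?_
  intro x hx
  refine le_trans hx (ENNReal.toReal_mono (measure_ne_top μ _) (measure_mono_ae ?_))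
  filter_upwards [hXY] with ω h hY
  exact le_trans h hY

end aux

section galois

variable (μ : Measure Ω) [IsProbabilityMeasure μ] {X : Ω → ℝ} {m M : ℝ}

lemma le_F_VaR (hXmeas : Measurable X) (hm : ∀ᵐ ω ∂μ, m ≤ X ω) (hM : ∀ᵐ ω ∂μ, X ω ≤ M)
    {s : ℝ} (hs0 : 0 < s) (hs1 : s ≤ 1) :
    s ≤ (μ {ω | X ω ≤ VaR μ X s}).toReal := by
  set q := VaR μ X s with hq
  set A : ℕ → Set Ω := fun n => {ω | X ω ≤ q + 1 / (n + 1)} with hA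
  have hAmeas : ∀ n, MeasurableSet (A n) := fun n =>
    measurableSet_le hXmeas measurable_const
  have hAanti : Antitone A := by
    intro a b hab ω hω
    simp only [hA, Set.mem_setOf_eq] at hω ⊢
    have h1 : (1:ℝ) / (b + 1) ≤ 1 / (a + 1) := by
      apply one_div_le_one_div_of_le
      · positivity
      · exact_mod_cast add_le_add_left (Nat.cast_le.2 hab) 1
    linarith
  have hInter : ⋂ n, A n = {ω | X ω ≤ q} := by
    ext ω
    simp only [Set.mem_iInter, hA, Set.mem_setOf_eq]
    constructor
    · intro h
      refine le_of_forall_pos_le_add fun ε hε => ?_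
      obtain ⟨n, hn⟩ := exists_nat_one_div_lt hε
      exact le_trans (h n) (by linarith [hn])
    · intro h n
      have : (0:ℝ) < 1 / (n + 1) := by positivity
      linarith
  have htend : Tendsto (fun n => μ (A n)) atTop (𝓝 (μ {ω | X ω ≤ q})) := by
    rw [← hInter]
    exact tendsto_measure_iInter_atTop (fun n => (hAmeas n).nullMeasurableSet) hAanti ⟨0, measure_ne_top μ _⟩
  have htendR : Tendsto (fun n => (μ (A n)).toReal) atTop (𝓝 ((μ {ω | X ω ≤ q}).toReal)) :=
    (ENNReal.tendsto_toReal (measure_ne_top μ _)).comp htend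
  refine ge_of_tendsto htendR (Eventually.of_forall fun n => ?_)
  -- show s ≤ (μ (A n)).toReal : q + 1/(n+1) is in the VaR set
  have hqn : q + 1 / (n + 1) ∈ {x : ℝ | s ≤ (μ {ω | X ω ≤ x}).toReal} := by
    have hlt : q < q + 1 / (n + 1) := by
      have : (0:ℝ) < 1 / (n + 1) := by positivity
      linarith
    obtain ⟨x, hxS, hxlt⟩ := exists_lt_of_csInf_lt
      ⟨M, VaR_set_nonempty μ hM hs1⟩ (show sInf _ < q + 1/(n+1) from hlt)
    exact Set.mem_setOf_eq ▸ le_trans hxS (F_mono μ hxlt.le)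
  exact hqn

lemma VaR_le_iff (hXmeas : Measurable X) (hm : ∀ᵐ ω ∂μ, m ≤ X ω) (hM : ∀ᵐ ω ∂μ, X ω ≤ M)
    {s : ℝ} (hs0 : 0 < s) (hs1 : s ≤ 1) (t : ℝ) :
    VaR μ X s ≤ t ↔ s ≤ (μ {ω | X ω ≤ t}).toReal := by
  constructor
  · intro h
    exact le_trans (le_F_VaR μ hXmeas hm hM hs0 hs1) (F_mono μ h)
  · intro h
    exact csInf_le (VaR_set_bddBelow μ hm hs0) h

end galois

section mapint

variable (μ : Measure Ω) [IsProbabilityMeasure μ] {X : Ω → ℝ} {m M : ℝ}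

lemma VaR_map (hXmeas : Measurable X) (hm : ∀ᵐ ω ∂μ, m ≤ X ω) (hM : ∀ᵐ ω ∂μ, X ω ≤ M) :
    (volume.restrict (Set.Ioo (0:ℝ) 1)).map (VaR μ X) = μ.map X := by
  haveI : IsProbabilityMeasure (μ.map X) := Measure.isProbabilityMeasure_map hXmeas.aemeasurable
  have hqmono : MonotoneOn (VaR μ X) (Set.Ioo 0 1) :=
    (VaR_mono_s μ hm hM).mono (Set.Ioo_subset_Ioc_self)
  have hqae : AEMeasurable (VaR μ X) (volume.restrict (Set.Ioo (0:ℝ) 1)) :=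
    aemeasurable_restrict_of_monotoneOn measurableSet_Ioo hqmono
  symm
  refine MeasureTheory.Measure.ext_of_Iic (μ.map X) _ (fun t => ?_)
  rw [Measure.map_apply hXmeas measurableSet_Iic,
    Measure.map_apply_of_aemeasurable hqae measurableSet_Iic,
    Measure.restrict_apply' measurableSet_Ioo]
  have hXt : (X ⁻¹' Set.Iic t) = {ω | X ω ≤ t} := rfl
  set c : ℝ := (μ {ω | X ω ≤ t}).toReal with hc
  have hc0 : 0 ≤ c := ENNReal.toReal_nonneg
  have hc1 : c ≤ 1 := by
    rw [hc]
    exact ENNReal.toReal_le_of_le_ofReal zero_le_one (by simpa using prob_le_one)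
  have hset : VaR μ X ⁻¹' Set.Iic t ∩ Set.Ioo 0 1 = Set.Iic c ∩ Set.Ioo 0 1 := by
    ext s
    simp only [Set.mem_inter_iff, Set.mem_preimage, Set.mem_Iic, Set.mem_Ioo,
      and_congr_left_iff]
    intro hs
    rw [VaR_le_iff μ hXmeas hm hM hs.1 hs.2.le t]
  rw [hXt, hset]
  have hvol : volume (Set.Iic c ∩ Set.Ioo (0:ℝ) 1) = ENNReal.ofReal c := by
    rcases lt_or_eq_of_le hc1 with h1 | h1
    · have : Set.Iic c ∩ Set.Ioo (0:ℝ) 1 = Set.Ioc 0 c := by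
        ext s
        simp only [Set.mem_inter_iff, Set.mem_Iic, Set.mem_Ioo, Set.mem_Ioc]
        constructor
        · rintro ⟨h, h2, h3⟩; exact ⟨h2, h⟩
        · rintro ⟨h2, h⟩; exact ⟨h, h2, lt_of_le_of_lt h h1⟩
      rw [this, Real.volume_Ioc, sub_zero]
    · have : Set.Iic c ∩ Set.Ioo (0:ℝ) 1 = Set.Ioo 0 1 := by
        ext s
        simp only [Set.mem_inter_iff, Set.mem_Iic, Set.mem_Ioo]
        constructor
        · rintro ⟨h, h2⟩; exact h2
        · rintro ⟨h2, h3⟩; exact ⟨h1 ▸ h3.le, h2, h3⟩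
      rw [this, Real.volume_Ioo, sub_zero, ← h1]
  rw [hvol, hc, ENNReal.ofReal_toReal (measure_ne_top μ _)]

lemma integral_VaR (hXmeas : Measurable X) (hm : ∀ᵐ ω ∂μ, m ≤ X ω) (hM : ∀ᵐ ω ∂μ, X ω ≤ M) :
    ∫ s in Set.Ioo (0:ℝ) 1, VaR μ X s = ∫ ω, X ω ∂μ := by
  have hqae : AEMeasurable (VaR μ X) (volume.restrict (Set.Ioo (0:ℝ) 1)) :=
    aemeasurable_restrict_of_monotoneOn measurableSet_Ioo
      ((VaR_mono_s μ hm hM).mono Set.Ioo_subset_Ioc_self)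
  have h1 : ∫ x, x ∂((volume.restrict (Set.Ioo (0:ℝ) 1)).map (VaR μ X))
      = ∫ s in Set.Ioo (0:ℝ) 1, VaR μ X s :=
    integral_map hqae aestronglyMeasurable_id
  have h2 : ∫ x, x ∂(μ.map X) = ∫ ω, X ω ∂μ :=
    integral_map hXmeas.aemeasurable aestronglyMeasurable_id
  rw [← h1, VaR_map μ hXmeas hm hM, h2]

end mapint


section es

variable (μ : Measure Ω) [IsProbabilityMeasure μ] {X Y : Ω → ℝ} {m M : ℝ}

lemma integrableOn_VaR (hm : ∀ᵐ ω ∂μ, m ≤ X ω) (hM : ∀ᵐ ω ∂μ, X ω ≤ M)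
    {s : Set ℝ} (hs : MeasurableSet s) (hsub : s ⊆ Set.Ioc 0 1) :
    IntegrableOn (VaR μ X) s volume := by
  have hmono : MonotoneOn (VaR μ X) s := (VaR_mono_s μ hm hM).mono hsub
  have hae : AEMeasurable (VaR μ X) (volume.restrict s) :=
    aemeasurable_restrict_of_monotoneOn hs hmono
  haveI : IsFiniteMeasure (volume.restrict s) := by
    constructor
    rw [Measure.restrict_apply_univ]
    exact lt_of_le_of_lt (measure_mono hsub) (by simp [Real.volume_Ioc])
  refine ⟨hae.aestronglyMeasurable, ?_⟩
  apply HasFiniteIntegral.of_bounded (C := max |m| |M|)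
  refine (ae_restrict_iff' hs).2 (ae_of_all _ fun x hx => ?_)
  have h1 := le_VaR μ hm hM (hsub hx).1 (hsub hx).2
  have h2 := VaR_le μ hm hM (hsub hx).1 (hsub hx).2
  rw [Real.norm_eq_abs, abs_le]
  constructor
  · exact le_trans (neg_le_neg (le_max_left |m| |M|)) (le_trans (neg_abs_le m) h1)
  · exact le_trans h2 (le_trans (le_abs_self M) (le_max_right |m| |M|))

lemma integral_le_ES (hXmeas : Measurable X) (hm : ∀ᵐ ω ∂μ, m ≤ X ω) (hM : ∀ᵐ ω ∂μ, X ω ≤ M)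
    {p : ℝ} (hp : p ∈ Set.Ioo (0:ℝ) 1) : ∫ ω, X ω ∂μ ≤ ES μ X p := by
  obtain ⟨hp0, hp1⟩ := hp
  have hIJunion : Set.Ioc (0:ℝ) p ∪ Set.Ioo p 1 = Set.Ioo 0 1 := by
    ext s
    simp only [Set.mem_union, Set.mem_Ioc, Set.mem_Ioo]
    constructor
    · rintro (⟨h1, h2⟩ | ⟨h1, h2⟩)
      · exact ⟨h1, lt_of_le_of_lt h2 hp1⟩
      · exact ⟨lt_trans hp0 h1, h2⟩
    · rintro ⟨h1, h2⟩
      rcases le_or_gt s p with h | h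
      · exact Or.inl ⟨h1, h⟩
      · exact Or.inr ⟨h, h2⟩
  have hintJ : IntegrableOn (VaR μ X) (Set.Ioc 0 p) volume :=
    integrableOn_VaR μ hm hM measurableSet_Ioc (Set.Ioc_subset_Ioc le_rfl hp1.le)
  have hintI : IntegrableOn (VaR μ X) (Set.Ioo p 1) volume :=
    integrableOn_VaR μ hm hM measurableSet_Ioo
      (fun x hx => ⟨lt_trans hp0 hx.1, hx.2.le⟩)
  have hsplit : ∫ s in Set.Ioo (0:ℝ) 1, VaR μ X s
      = (∫ s in Set.Ioc 0 p, VaR μ X s) + ∫ s in Set.Ioo p 1, VaR μ X s := by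
    rw [← hIJunion, setIntegral_union ((by rw [Set.disjoint_left]; rintro s ⟨_, h2⟩ ⟨h3, _⟩; linarith))
      measurableSet_Ioo hintJ hintI]
  set I := ∫ s in Set.Ioo p 1, VaR μ X s with hI
  set J := ∫ s in Set.Ioc (0:ℝ) p, VaR μ X s with hJ
  have hqp_mem : p ∈ Set.Ioc (0:ℝ) 1 := ⟨hp0, hp1.le⟩
  have hJle : J ≤ p * VaR μ X p := by
    have : J ≤ ∫ _ in Set.Ioc (0:ℝ) p, VaR μ X p := by
      refine setIntegral_mono_on hintJ (integrableOn_const ?_) measurableSet_Ioc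
        (fun x hx => (VaR_mono_s μ hm hM) ⟨hx.1, le_trans hx.2 hp1.le⟩ hqp_mem hx.2)
      simp [Real.volume_Ioc]
    rwa [setIntegral_const, measureReal_def, Real.volume_Ioc, sub_zero,
      ENNReal.toReal_ofReal hp0.le, smul_eq_mul] at this
  have hIge : (1 - p) * VaR μ X p ≤ I := by
    have : (∫ _ in Set.Ioo p 1, VaR μ X p) ≤ I := by
      refine setIntegral_mono_on (integrableOn_const ?_) hintI measurableSet_Ioo
        (fun x hx => (VaR_mono_s μ hm hM) hqp_mem ⟨lt_trans hp0 hx.1, hx.2.le⟩ hx.1.le)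
      simp [Real.volume_Ioo]
    rwa [setIntegral_const, measureReal_def, Real.volume_Ioo,
      ENNReal.toReal_ofReal (by linarith), smul_eq_mul] at this
  have hEX : ∫ ω, X ω ∂μ = J + I := by
    rw [← integral_VaR μ hXmeas hm hM, hsplit]
  rw [hEX, ES, ← hI, inv_mul_eq_div, le_div_iff₀ (by linarith : (0:ℝ) < 1 - p)]
  nlinarith [mul_le_mul_of_nonneg_left hJle (by linarith : (0:ℝ) ≤ 1 - p),
    mul_le_mul_of_nonneg_left hIge hp0.le]

lemma ES_mono (hmX : ∀ᵐ ω ∂μ, m ≤ X ω) (hMY : ∀ᵐ ω ∂μ, Y ω ≤ M)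
    (hmY : ∀ᵐ ω ∂μ, m ≤ Y ω) (hMX : ∀ᵐ ω ∂μ, X ω ≤ M)
    (hXY : ∀ᵐ ω ∂μ, X ω ≤ Y ω) {p : ℝ} (hp : p ∈ Set.Ioo (0:ℝ) 1) :
    ES μ X p ≤ ES μ Y p := by
  obtain ⟨hp0, hp1⟩ := hp
  refine mul_le_mul_of_nonneg_left ?_ (le_of_lt (inv_pos.2 (by linarith)))
  refine setIntegral_mono_on
    (integrableOn_VaR μ hmX hMX measurableSet_Ioo (fun x hx => ⟨lt_trans hp0 hx.1, hx.2.le⟩))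
    (integrableOn_VaR μ hmY hMY measurableSet_Ioo (fun x hx => ⟨lt_trans hp0 hx.1, hx.2.le⟩))
    measurableSet_Ioo (fun x hx => ?_)
  exact VaR_mono_X μ hmX hMY hXY (lt_trans hp0 hx.1) hx.2.le

end es

section final

variable {μ : Measure Ω} [IsProbabilityMeasure μ] {X : Ω → ℝ}

lemma exists_ae_abs_bound (hX : MemLp X ⊤ μ) : ∃ C : ℝ, ∀ᵐ ω ∂μ, |X ω| ≤ C := by
  refine ⟨(eLpNormEssSup X μ).toReal, ?_⟩
  have hfin : eLpNormEssSup X μ ≠ ⊤ := by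
    have := hX.2
    rwa [eLpNorm_exponent_top, lt_top_iff_ne_top] at this
  filter_upwards [ae_le_eLpNormEssSup (f := X) (μ := μ)] with ω h
  have := ENNReal.toReal_mono hfin h
  simpa using this

lemma VaR_congr_ae {X' : Ω → ℝ} (h : X =ᵐ[μ] X') : VaR μ X = VaR μ X' := by
  funext s
  have hF : ∀ x, μ {ω | X ω ≤ x} = μ {ω | X' ω ≤ x} := by
    intro x
    refine measure_congr ?_
    filter_upwards [h] with ω hω
    show (X ω ≤ x) = (X' ω ≤ x)
    rw [hω]
  simp only [VaR, hF]

end final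


/-- `ρ(X) = g(ES_p(X) - E[X]) + E[X]` is monotone. -/
theorem stmt5 (μ : Measure Ω) [IsProbabilityMeasure μ] (p : ℝ) (hp : p ∈ Set.Ioo (0:ℝ) 1)
    (g : ℝ → ℝ) (hg_mono : MonotoneOn g (Set.Ici 0)) (hg0 : g 0 = 0)
    (hg_lip : ∀ x ∈ Set.Ici (0:ℝ), ∀ y ∈ Set.Ici (0:ℝ), |g x - g y| ≤ |x - y|)
    (X Y : Ω → ℝ) (hX : MemLp X ⊤ μ) (hY : MemLp Y ⊤ μ)
    (hXY : ∀ᵐ ω ∂μ, X ω ≤ Y ω) :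
    g (ES μ X p - ∫ ω, X ω ∂μ) + ∫ ω, X ω ∂μ ≤
      g (ES μ Y p - ∫ ω, Y ω ∂μ) + ∫ ω, Y ω ∂μ := by
  -- measurable representatives
  have hXae : AEMeasurable X μ := hX.aestronglyMeasurable.aemeasurable
  have hYae : AEMeasurable Y μ := hY.aestronglyMeasurable.aemeasurable
  set X' : Ω → ℝ := hXae.mk X with hX'def
  set Y' : Ω → ℝ := hYae.mk Y with hY'def
  have hX'meas : Measurable X' := hXae.measurable_mk
  have hY'meas : Measurable Y' := hYae.measurable_mk
  have haeX : X =ᵐ[μ] X' := hXae.ae_eq_mk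
  have haeY : Y =ᵐ[μ] Y' := hYae.ae_eq_mk
  -- bounds
  obtain ⟨CX, hCX⟩ := exists_ae_abs_bound hX
  obtain ⟨CY, hCY⟩ := exists_ae_abs_bound hY
  set C : ℝ := max CX CY with hC
  have hmX' : ∀ᵐ ω ∂μ, -C ≤ X' ω := by
    filter_upwards [haeX, hCX] with ω h1 h2
    rw [← h1]; rw [abs_le] at h2
    exact le_trans (neg_le_neg (le_max_left CX CY)) h2.1
  have hMX' : ∀ᵐ ω ∂μ, X' ω ≤ C := by
    filter_upwards [haeX, hCX] with ω h1 h2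
    rw [← h1]; rw [abs_le] at h2
    exact le_trans h2.2 (le_max_left CX CY)
  have hmY' : ∀ᵐ ω ∂μ, -C ≤ Y' ω := by
    filter_upwards [haeY, hCY] with ω h1 h2
    rw [← h1]; rw [abs_le] at h2
    exact le_trans (neg_le_neg (le_max_right CX CY)) h2.1
  have hMY' : ∀ᵐ ω ∂μ, Y' ω ≤ C := by
    filter_upwards [haeY, hCY] with ω h1 h2
    rw [← h1]; rw [abs_le] at h2
    exact le_trans h2.2 (le_max_right CX CY)
  have hXY' : ∀ᵐ ω ∂μ, X' ω ≤ Y' ω := by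
    filter_upwards [haeX, haeY, hXY] with ω h1 h2 h3
    rw [← h1, ← h2]; exact h3
  -- transfer ES and integrals to the primed versions
  have hESX : ES μ X p = ES μ X' p := by
    rw [ES, ES, VaR_congr_ae haeX]
  have hESY : ES μ Y p = ES μ Y' p := by
    rw [ES, ES, VaR_congr_ae haeY]
  have hEX : ∫ ω, X ω ∂μ = ∫ ω, X' ω ∂μ := integral_congr_ae haeX
  have hEY : ∫ ω, Y ω ∂μ = ∫ ω, Y' ω ∂μ := integral_congr_ae haeY
  rw [hESX, hESY, hEX, hEY]
  -- key inequalities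
  have h1 : ∫ ω, X' ω ∂μ ≤ ES μ X' p := integral_le_ES μ hX'meas hmX' hMX' hp
  have h2 : ∫ ω, Y' ω ∂μ ≤ ES μ Y' p := integral_le_ES μ hY'meas hmY' hMY' hp
  have h3 : ES μ X' p ≤ ES μ Y' p := ES_mono μ hmX' hMY' hmY' hMX' hXY' hp
  have h4 : ∫ ω, X' ω ∂μ ≤ ∫ ω, Y' ω ∂μ := by
    refine integral_mono_ae ((hX.ae_eq haeX).integrable le_top)
      ((hY.ae_eq haeY).integrable le_top) hXY'
  set a : ℝ := ES μ X' p - ∫ ω, X' ω ∂μ with ha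
  set b : ℝ := ES μ Y' p - ∫ ω, Y' ω ∂μ with hb
  have ha0 : 0 ≤ a := by rw [ha]; linarith
  have hb0 : 0 ≤ b := by rw [hb]; linarith
  rcases le_total a b with hab | hab
  · have := hg_mono ha0 hb0 hab
    linarith
  · have hlip := hg_lip a ha0 b hb0
    have h5 : g a - g b ≤ |g a - g b| := le_abs_self _
    have h6 : |a - b| = a - b := abs_of_nonneg (by linarith)
    rw [h6] at hlip
    have h7 : a - b ≤ (∫ ω, Y' ω ∂μ) - ∫ ω, X' ω ∂μ := by
      rw [ha, hb]; linarith
    linarith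
end

section
/- Let C be a bivariate copula, (U,V) ~ C and (U',V') ~ C independent of (U,V), and define A = {U > U', V < V'} ∪ {U < U', V > V'} and Ṽ = V·1_{A^c} + V'·1_A. Then Ṽ is uniformly distributed on [0,1]. -/
open MeasureTheory ProbabilityTheory Filter
open scoped Classical

variable {Ω : Type*} [MeasurableSpace Ω]

/-- with `(U,V)` and `(U',V')` i.i.d. with copula distribution,
`Ṽ = V 1_{Aᶜ} + V' 1_A` is uniform on `[0,1]`. -/
theorem stmt16 (μ : Measure Ω) [IsProbabilityMeasure μ]
    (U V U' V' : Ω → ℝ)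
    (hU : Measurable U) (hV : Measurable V) (hU' : Measurable U') (hV' : Measurable V')
    (hid : IdentDistrib (fun ω => (U ω, V ω)) (fun ω => (U' ω, V' ω)) μ μ)
    (hindep : IndepFun (fun ω => (U ω, V ω)) (fun ω => (U' ω, V' ω)) μ)
    (hVu : μ.map V = volume.restrict (Set.Icc 0 1))
    (A : Set Ω)
    (hA : A = {ω | (U' ω < U ω ∧ V ω < V' ω) ∨ (U ω < U' ω ∧ V' ω < V ω)}) :
    μ.map (fun ω => if ω ∈ A then V' ω else V ω) = volume.restrict (Set.Icc 0 1) := by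
  have hUV : Measurable fun ω => (U ω, V ω) := hU.prodMk hV
  have hUV' : Measurable fun ω => (U' ω, V' ω) := hU'.prodMk hV'
  -- marginal
  have hV'V : μ.map V' = μ.map V := by
    have := (hid.comp measurable_snd).map_eq
    exact this.symm
  -- the selection function
  set cond : (ℝ × ℝ) × (ℝ × ℝ) → Prop :=
    fun p => (p.2.1 < p.1.1 ∧ p.1.2 < p.2.2) ∨ (p.1.1 < p.2.1 ∧ p.2.2 < p.1.2) with hcond
  have hcondMeas : MeasurableSet {p : (ℝ × ℝ) × (ℝ × ℝ) | cond p} := by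
    apply MeasurableSet.union
    · exact ((measurableSet_lt (measurable_fst.comp measurable_snd)
        (measurable_fst.comp measurable_fst)).inter
        (measurableSet_lt (measurable_snd.comp measurable_fst)
        (measurable_snd.comp measurable_snd)))
    · exact ((measurableSet_lt (measurable_fst.comp measurable_fst)
        (measurable_fst.comp measurable_snd)).inter
        (measurableSet_lt (measurable_snd.comp measurable_snd)
        (measurable_snd.comp measurable_fst)))
  set F : (ℝ × ℝ) × (ℝ × ℝ) → ℝ := fun p => if cond p then p.2.2 else p.1.2 with hF
  have hFmeas : Measurable F :=
    Measurable.ite hcondMeas (measurable_snd.comp measurable_snd)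
      (measurable_snd.comp measurable_fst)
  set W : Ω → (ℝ × ℝ) × (ℝ × ℝ) := fun ω => ((U ω, V ω), (U' ω, V' ω)) with hW
  have hWmeas : Measurable W := hUV.prodMk hUV'
  -- law of W invariant under swap
  have hprod : μ.map W = (μ.map fun ω => (U ω, V ω)).prod (μ.map fun ω => (U' ω, V' ω)) :=
    (indepFun_iff_map_prod_eq_prod_map_map hUV.aemeasurable hUV'.aemeasurable).1 hindep
  have hswap : (μ.map W).map Prod.swap = μ.map W := by
    rw [hprod, Measure.prod_swap, hid.map_eq]
  -- Ṽ and G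
  have hAset : A = W ⁻¹' {p | cond p} := by
    ext ω; simp [hA, hW, hcond]
  have hAmeas : MeasurableSet A := hAset ▸ hWmeas hcondMeas
  have hTmap : μ.map (fun ω => if ω ∈ A then V' ω else V ω) = (μ.map W).map F := by
    rw [Measure.map_map hFmeas hWmeas]
    congr 1
    ext ω
    simp only [Function.comp_apply, hF, hW, hAset, Set.mem_preimage, Set.mem_setOf_eq]
  set G : Ω → ℝ := fun ω => if ω ∈ A then V ω else V' ω with hG
  have hGmap : μ.map G = (μ.map W).map F := by
    have hswapcond : ∀ p : (ℝ × ℝ) × (ℝ × ℝ), cond (Prod.swap p) ↔ cond p := by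
      intro p; simp [hcond, Prod.swap]; tauto
    calc μ.map G = (μ.map W).map (F ∘ Prod.swap) := by
          rw [Measure.map_map (hFmeas.comp measurable_swap) hWmeas]
          congr 1
          ext ω
          simp only [Function.comp_apply, hG, hF, hW, hAset, Set.mem_preimage, Set.mem_setOf_eq,
            hswapcond, Prod.swap]
          exact if_congr (hswapcond ((U ω, V ω), (U' ω, V' ω))).symm rfl rfl
      _ = ((μ.map W).map Prod.swap).map F := by
          rw [Measure.map_map hFmeas measurable_swap]
      _ = (μ.map W).map F := by rw [hswap]
  -- the sum identity
  have hGmeas : Measurable G := Measurable.ite hAmeas hV hV'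
  have hTmeas : Measurable (fun ω => if ω ∈ A then V' ω else V ω) :=
    Measurable.ite hAmeas hV' hV
  have key : ∀ s : Set ℝ, MeasurableSet s →
      μ.map (fun ω => if ω ∈ A then V' ω else V ω) s = μ.map V s := by
    intro s hs
    have h1 : μ.map (fun ω => if ω ∈ A then V' ω else V ω) s
        = μ (A ∩ V' ⁻¹' s) + μ (Aᶜ ∩ V ⁻¹' s) := by
      rw [Measure.map_apply hTmeas hs]
      have : (fun ω => if ω ∈ A then V' ω else V ω) ⁻¹' s
          = (A ∩ V' ⁻¹' s) ∪ (Aᶜ ∩ V ⁻¹' s) := by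
        ext ω; by_cases h : ω ∈ A <;> simp [h]
      rw [this, measure_union _ (hAmeas.compl.inter (hV hs))]
      exact (Set.disjoint_left.2 fun ω h1 h2 => h2.1 h1.1)
    have h2 : μ.map G s = μ (A ∩ V ⁻¹' s) + μ (Aᶜ ∩ V' ⁻¹' s) := by
      rw [Measure.map_apply hGmeas hs]
      have : G ⁻¹' s = (A ∩ V ⁻¹' s) ∪ (Aᶜ ∩ V' ⁻¹' s) := by
        ext ω; by_cases h : ω ∈ A <;> simp [hG, h]
      rw [this, measure_union _ (hAmeas.compl.inter (hV' hs))]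
      exact (Set.disjoint_left.2 fun ω h1 h2 => h2.1 h1.1)
    have hTG : μ.map (fun ω => if ω ∈ A then V' ω else V ω) s = μ.map G s := by
      rw [hTmap, hGmap]
    have hsum : μ.map (fun ω => if ω ∈ A then V' ω else V ω) s + μ.map G s
        = μ.map V s + μ.map V' s := by
      rw [h1, h2, Measure.map_apply hV hs, Measure.map_apply hV' hs]
      have e1 : μ (V ⁻¹' s) = μ (A ∩ V ⁻¹' s) + μ (Aᶜ ∩ V ⁻¹' s) := by
        rw [Set.inter_comm A, Set.inter_comm Aᶜ, ← Set.diff_eq, measure_inter_add_diff _ hAmeas]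
      have e2 : μ (V' ⁻¹' s) = μ (A ∩ V' ⁻¹' s) + μ (Aᶜ ∩ V' ⁻¹' s) := by
        rw [Set.inter_comm A, Set.inter_comm Aᶜ, ← Set.diff_eq, measure_inter_add_diff _ hAmeas]
      rw [e1, e2]; ring
    rw [hTG, hV'V, ← two_mul, ← two_mul] at hsum
    have hfin : μ.map V s ≠ ⊤ := by
      have : IsProbabilityMeasure (μ.map V) := Measure.isProbabilityMeasure_map hV.aemeasurable
      exact measure_ne_top _ _
    rw [hTG]
    exact (ENNReal.mul_right_inj (by norm_num) (by norm_num)).1 hsum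
  rw [← hVu]
  exact Measure.ext key
end

section
/- With notation as in the previous construction (C a bivariate copula, (U,V), (U',V') i.i.d. ~ C, A = {U > U', V < V'} ∪ {U < U', V > V'}, Ṽ = V 1_{A^c} + V' 1_A), the joint distribution Ĉ of (U, Ṽ) satisfies Ĉ(u,v) ≥ C(u,v) for all (u,v) ∈ [0,1]^2. -/
open MeasureTheory ProbabilityTheory Filter
open scoped Classical

variable {Ω : Type*} [MeasurableSpace Ω]

/-- the joint distribution `Ĉ` of `(U, Ṽ)` dominates `C`
pointwise (concordance order). -/
theorem stmt17 (μ : Measure Ω) [IsProbabilityMeasure μ]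
    (U V U' V' : Ω → ℝ)
    (hU : Measurable U) (hV : Measurable V) (hU' : Measurable U') (hV' : Measurable V')
    (hid : IdentDistrib (fun ω => (U ω, V ω)) (fun ω => (U' ω, V' ω)) μ μ)
    (hindep : IndepFun (fun ω => (U ω, V ω)) (fun ω => (U' ω, V' ω)) μ)
    (hUu : μ.map U = volume.restrict (Set.Icc 0 1))
    (hVu : μ.map V = volume.restrict (Set.Icc 0 1))
    (A : Set Ω)
    (hA : A = {ω | (U' ω < U ω ∧ V ω < V' ω) ∨ (U ω < U' ω ∧ V' ω < V ω)}) :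
    ∀ u v : ℝ, u ∈ Set.Icc (0:ℝ) 1 → v ∈ Set.Icc (0:ℝ) 1 →
      μ {ω | U ω ≤ u ∧ V ω ≤ v} ≤
        μ {ω | U ω ≤ u ∧ (if ω ∈ A then V' ω else V ω) ≤ v} := by
  intro u v _ _
  have hm1 : Measurable (fun ω => (U ω, V ω)) := hU.prodMk hV
  have hm2 : Measurable (fun ω => (U' ω, V' ω)) := hU'.prodMk hV'
  -- exchangeability of the two i.i.d. copies
  have hmap : μ.map (fun ω => ((U ω, V ω), (U' ω, V' ω)))
      = μ.map (fun ω => ((U' ω, V' ω), (U ω, V ω))) := by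
    rw [(ProbabilityTheory.indepFun_iff_map_prod_eq_prod_map_map hm1.aemeasurable
          hm2.aemeasurable).mp hindep,
        (ProbabilityTheory.indepFun_iff_map_prod_eq_prod_map_map hm2.aemeasurable
          hm1.aemeasurable).mp hindep.symm, hid.map_eq]
  -- key inequality via exchangeability
  have hkey : μ {ω | U ω ≤ u ∧ V ω ≤ v ∧ v < V' ω ∧ U' ω < U ω}
      ≤ μ {ω | U ω ≤ u ∧ V' ω ≤ v ∧ v < V ω ∧ U ω < U' ω} := by
    set S : Set ((ℝ × ℝ) × (ℝ × ℝ)) :=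
      {p | p.1.1 ≤ u ∧ p.1.2 ≤ v ∧ v < p.2.2 ∧ p.2.1 < p.1.1} with hS
    have hSm : MeasurableSet S := by
      have hrw : S = {p : (ℝ × ℝ) × (ℝ × ℝ) | p.1.1 ≤ u} ∩
          ({p : (ℝ × ℝ) × (ℝ × ℝ) | p.1.2 ≤ v} ∩
          ({p : (ℝ × ℝ) × (ℝ × ℝ) | v < p.2.2} ∩
           {p : (ℝ × ℝ) × (ℝ × ℝ) | p.2.1 < p.1.1})) := rfl
      rw [hrw]
      exact (measurableSet_le measurable_fst.fst measurable_const).inter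
        ((measurableSet_le measurable_fst.snd measurable_const).inter
        ((measurableSet_lt measurable_const measurable_snd.snd).inter
        (measurableSet_lt measurable_snd.fst measurable_fst.fst)))
    have h1 : {ω | U ω ≤ u ∧ V ω ≤ v ∧ v < V' ω ∧ U' ω < U ω}
        = (fun ω => ((U ω, V ω), (U' ω, V' ω))) ⁻¹' S := rfl
    have h2 : {ω | U' ω ≤ u ∧ V' ω ≤ v ∧ v < V ω ∧ U ω < U' ω}
        = (fun ω => ((U' ω, V' ω), (U ω, V ω))) ⁻¹' S := rfl
    calc μ {ω | U ω ≤ u ∧ V ω ≤ v ∧ v < V' ω ∧ U' ω < U ω}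
        = μ.map (fun ω => ((U ω, V ω), (U' ω, V' ω))) S := by
          rw [Measure.map_apply (hm1.prodMk hm2) hSm, h1]
      _ = μ.map (fun ω => ((U' ω, V' ω), (U ω, V ω))) S := by rw [hmap]
      _ = μ {ω | U' ω ≤ u ∧ V' ω ≤ v ∧ v < V ω ∧ U ω < U' ω} := by
          rw [Measure.map_apply (hm2.prodMk hm1) hSm, h2]
      _ ≤ μ {ω | U ω ≤ u ∧ V' ω ≤ v ∧ v < V ω ∧ U ω < U' ω} := by
          refine measure_mono fun ω h => ?_
          obtain ⟨h1, h2, h3, h4⟩ := h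
          exact ⟨h4.le.trans h1, h2, h3, h4⟩
  set S0 : Set Ω := {ω | U ω ≤ u ∧ V ω ≤ v} with hS0
  set S1a : Set Ω := {ω | U ω ≤ u ∧ V' ω ≤ v} with hS1a
  set S1 : Set Ω := {ω | U ω ≤ u ∧ (if ω ∈ A then V' ω else V ω) ≤ v} with hS1
  set A1 : Set Ω := {ω | U' ω < U ω ∧ V ω < V' ω} with hA1
  set A2 : Set Ω := {ω | U ω < U' ω ∧ V' ω < V ω} with hA2
  set D1 : Set Ω := {ω | U ω ≤ u ∧ V ω ≤ v ∧ v < V' ω ∧ U' ω < U ω} with hD1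
  set D2 : Set Ω := {ω | U ω ≤ u ∧ V' ω ≤ v ∧ v < V ω ∧ U ω < U' ω} with hD2
  have mS0 : MeasurableSet S0 :=
    (measurableSet_le hU measurable_const).inter (measurableSet_le hV measurable_const)
  have mS1a : MeasurableSet S1a :=
    (measurableSet_le hU measurable_const).inter (measurableSet_le hV' measurable_const)
  have mA1 : MeasurableSet A1 := (measurableSet_lt hU' hU).inter (measurableSet_lt hV hV')
  have mA2 : MeasurableSet A2 := (measurableSet_lt hU hU').inter (measurableSet_lt hV' hV)
  have hAu : A = A1 ∪ A2 := hA
  have mA : MeasurableSet A := hAu ▸ mA1.union mA2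
  -- split both sides along A
  have hS1split : μ S1 = μ (S1 ∩ A) + μ (S1 \ A) := (measure_inter_add_diff S1 mA).symm
  have hS0split : μ S0 = μ (S0 ∩ A) + μ (S0 \ A) := (measure_inter_add_diff S0 mA).symm
  have hdiff : S1 \ A = S0 \ A := by
    ext ω
    simp only [Set.mem_diff, hS1, hS0, Set.mem_setOf_eq]
    constructor <;> rintro ⟨⟨h1, h2⟩, h3⟩ <;>
      exact ⟨⟨h1, by simpa [if_neg h3] using h2⟩, h3⟩
  have hinter : S1 ∩ A = S1a ∩ A := by
    ext ω
    simp only [Set.mem_inter_iff, hS1, hS1a, Set.mem_setOf_eq]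
    constructor <;> rintro ⟨⟨h1, h2⟩, h3⟩ <;>
      exact ⟨⟨h1, by simpa [if_pos h3] using h2⟩, h3⟩
  -- decompose intersections with A1 and A2
  have hdisj12 : Disjoint A1 A2 := by
    rw [Set.disjoint_left]
    rintro ω ⟨h1, _⟩ ⟨h3, _⟩
    exact absurd h3 (not_lt.2 h1.le)
  have hdec1 : S0 ∩ A1 = (S1a ∩ A1) ∪ D1 := by
    ext ω
    simp only [Set.mem_inter_iff, Set.mem_union, hS0, hS1a, hA1, hD1, Set.mem_setOf_eq]
    constructor
    · rintro ⟨⟨hu, hv⟩, h3, h4⟩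
      rcases le_or_gt (V' ω) v with h | h
      · exact Or.inl ⟨⟨hu, h⟩, h3, h4⟩
      · exact Or.inr ⟨hu, hv, h, h3⟩
    · rintro (⟨⟨hu, hv'⟩, h3, h4⟩ | ⟨hu, hv, h, h3⟩)
      · exact ⟨⟨hu, h4.le.trans hv'⟩, h3, h4⟩
      · exact ⟨⟨hu, hv⟩, h3, lt_of_le_of_lt hv h⟩
  have hdec2 : S1a ∩ A2 = (S0 ∩ A2) ∪ D2 := by
    ext ω
    simp only [Set.mem_inter_iff, Set.mem_union, hS0, hS1a, hA2, hD2, Set.mem_setOf_eq]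
    constructor
    · rintro ⟨⟨hu, hv'⟩, h3, h4⟩
      rcases le_or_gt (V ω) v with h | h
      · exact Or.inl ⟨⟨hu, h⟩, h3, h4⟩
      · exact Or.inr ⟨hu, hv', h, h3⟩
    · rintro (⟨⟨hu, hv⟩, h3, h4⟩ | ⟨hu, hv', h, h3⟩)
      · exact ⟨⟨hu, h4.le.trans hv⟩, h3, h4⟩
      · exact ⟨⟨hu, hv'⟩, h3, lt_of_le_of_lt hv' h⟩
  have mD1 : MeasurableSet D1 :=
    (measurableSet_le hU measurable_const).inter ((measurableSet_le hV measurable_const).inter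
      ((measurableSet_lt measurable_const hV').inter (measurableSet_lt hU' hU)))
  have mD2 : MeasurableSet D2 :=
    (measurableSet_le hU measurable_const).inter ((measurableSet_le hV' measurable_const).inter
      ((measurableSet_lt measurable_const hV).inter (measurableSet_lt hU hU')))
  have hdj1 : Disjoint (S1a ∩ A1) D1 := by
    rw [Set.disjoint_left]
    rintro ω ⟨⟨_, h2⟩, _⟩ ⟨_, _, h5, _⟩
    exact absurd h5 (not_lt.2 h2)
  have hdj2 : Disjoint (S0 ∩ A2) D2 := by
    rw [Set.disjoint_left]
    rintro ω ⟨⟨_, h2⟩, _⟩ ⟨_, _, h5, _⟩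
    exact absurd h5 (not_lt.2 h2)
  have hmeas1 : μ (S0 ∩ A1) = μ (S1a ∩ A1) + μ D1 := by
    rw [hdec1, measure_union hdj1 mD1]
  have hmeas2 : μ (S1a ∩ A2) = μ (S0 ∩ A2) + μ D2 := by
    rw [hdec2, measure_union hdj2 mD2]
  have hSA0 : μ (S0 ∩ A) = μ (S0 ∩ A1) + μ (S0 ∩ A2) := by
    rw [hAu, Set.inter_union_distrib_left,
      measure_union (hdisj12.mono Set.inter_subset_right Set.inter_subset_right)
        (mS0.inter mA2)]
  have hSA1 : μ (S1a ∩ A) = μ (S1a ∩ A1) + μ (S1a ∩ A2) := by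
    rw [hAu, Set.inter_union_distrib_left,
      measure_union (hdisj12.mono Set.inter_subset_right Set.inter_subset_right)
        (mS1a.inter mA2)]
  have hfinal : μ (S0 ∩ A) ≤ μ (S1a ∩ A) := by
    rw [hSA0, hSA1, hmeas1, hmeas2]
    calc μ (S1a ∩ A1) + μ D1 + μ (S0 ∩ A2)
        ≤ μ (S1a ∩ A1) + μ D2 + μ (S0 ∩ A2) := by
          gcongr
      _ = μ (S1a ∩ A1) + (μ (S0 ∩ A2) + μ D2) := by ring
  calc μ S0 = μ (S0 ∩ A) + μ (S0 \ A) := hS0split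
    _ ≤ μ (S1a ∩ A) + μ (S0 \ A) := add_le_add_left hfinal _
    _ = μ (S1 ∩ A) + μ (S1 \ A) := by rw [hinter, hdiff]
    _ = μ S1 := hS1split.symm
end

section
/- Let f : H → ℝ be increasing in its first argument, where H = {(x,y) ∈ ℝ² : x ≥ y}. Then ρ(X) = f(ES_p(X), E[X]) satisfies p-concentration aversion: for any X =_d X', Y =_d Y' in L^∞ with (X',Y') p-concentrated, ρ(X+Y) ≤ ρ(X'+Y'). -/
open MeasureTheory ProbabilityTheory Filter
open scoped Classical

variable {Ω : Type*} [MeasurableSpace Ω]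

namespace S18

open Set
open scoped Topology ENNReal

set_option linter.unusedSectionVars false
set_option linter.unusedVariables false

noncomputable def F (μ : Measure Ω) (X : Ω → ℝ) (x : ℝ) : ℝ := (μ {ω | X ω ≤ x}).toReal

variable {μ : Measure Ω} [IsProbabilityMeasure μ] {X Y Z : Ω → ℝ} {C D : ℝ} {p : ℝ}

lemma F_mono : Monotone (F μ X) := fun a b hab =>
  ENNReal.toReal_mono (measure_ne_top _ _) (measure_mono fun ω h => le_trans h hab)

lemma F_le_one (x : ℝ) : F μ X x ≤ 1 := by
  have : μ {ω | X ω ≤ x} ≤ 1 := prob_le_one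
  simpa [F] using ENNReal.toReal_mono ENNReal.one_ne_top this

lemma F_nonneg (x : ℝ) : 0 ≤ F μ X x := ENNReal.toReal_nonneg

lemma ae_le_C (hC : ∀ᵐ ω ∂μ, |X ω| ≤ C) : ∀ᵐ ω ∂μ, X ω ≤ C :=
  hC.mono fun ω h => le_trans (le_abs_self _) h

lemma ae_neg_C (hC : ∀ᵐ ω ∂μ, |X ω| ≤ C) : ∀ᵐ ω ∂μ, -C ≤ X ω :=
  hC.mono fun ω h => neg_le_of_neg_le (le_trans (neg_le_abs _) h)

lemma C_nonneg (hC : ∀ᵐ ω ∂μ, |X ω| ≤ C) : 0 ≤ C := by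
  haveI : (MeasureTheory.ae μ).NeBot := ae_neBot.mpr (IsProbabilityMeasure.ne_zero μ)
  obtain ⟨ω, hω⟩ := hC.exists
  exact le_trans (abs_nonneg _) hω

lemma F_C_eq_one (hC : ∀ᵐ ω ∂μ, |X ω| ≤ C) : F μ X C = 1 := by
  have h : {ω | X ω ≤ C} =ᵐ[μ] (univ : Set Ω) :=
    (ae_le_C hC).mono fun ω h => eq_iff_iff.mpr (iff_of_true h trivial)
  simp [F, measure_congr h]

lemma meas_null_of_lt (hC : ∀ᵐ ω ∂μ, |X ω| ≤ C) {x : ℝ} (hx : x < -C) :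
    μ {ω | X ω ≤ x} = 0 := by
  have h : {ω | X ω ≤ x} =ᵐ[μ] (∅ : Set Ω) :=
    (ae_neg_C hC).mono fun ω h => eq_iff_iff.mpr
      (iff_of_false (fun h2 => absurd (le_trans h h2) (not_le.mpr hx)) (fun h2 => h2))
  simpa using measure_congr h

lemma nonempty_S (hC : ∀ᵐ ω ∂μ, |X ω| ≤ C) {s : ℝ} (hs : s ≤ 1) :
    {x : ℝ | s ≤ F μ X x}.Nonempty := ⟨C, by rw [mem_setOf_eq, F_C_eq_one hC]; exact hs⟩

lemma lb_S (hC : ∀ᵐ ω ∂μ, |X ω| ≤ C) {s : ℝ} (hs : 0 < s) :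
    -C ∈ lowerBounds {x : ℝ | s ≤ F μ X x} := by
  intro x hx
  by_contra h
  push_neg at h
  have : F μ X x = 0 := by simp [F, meas_null_of_lt hC h]
  rw [mem_setOf_eq, this] at hx
  exact absurd (lt_of_lt_of_le hs hx) (lt_irrefl 0)

lemma bddBelow_S (hC : ∀ᵐ ω ∂μ, |X ω| ≤ C) {s : ℝ} (hs : 0 < s) :
    BddBelow {x : ℝ | s ≤ F μ X x} := ⟨-C, lb_S hC hs⟩

lemma VaR_eq_sInf (s : ℝ) : VaR μ X s = sInf {x : ℝ | s ≤ F μ X x} := rfl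

lemma VaR_mono (hC : ∀ᵐ ω ∂μ, |X ω| ≤ C) {s t : ℝ} (hs : 0 < s) (hst : s ≤ t) (ht : t ≤ 1) :
    VaR μ X s ≤ VaR μ X t :=
  csInf_le_csInf (bddBelow_S hC hs) (nonempty_S hC ht)
    (fun x hx => le_trans hst hx)

lemma VaR_le_C (hC : ∀ᵐ ω ∂μ, |X ω| ≤ C) {s : ℝ} (hs0 : 0 < s) (hs : s ≤ 1) : VaR μ X s ≤ C :=
  csInf_le (bddBelow_S hC hs0) (by show s ≤ F μ X C; rw [F_C_eq_one hC]; exact hs)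

lemma neg_C_le_VaR (hC : ∀ᵐ ω ∂μ, |X ω| ≤ C) {s : ℝ} (hs : 0 < s) (hs1 : s ≤ 1) :
    -C ≤ VaR μ X s :=
  le_csInf (nonempty_S hC hs1) (fun x hx => lb_S hC hs hx)

lemma F_tendsto (hX : Measurable X) (x : ℝ) :
    Tendsto (fun n : ℕ => F μ X (x + 1 / (n + 1))) atTop (𝓝 (F μ X x)) := by
  have hset : ⋂ n : ℕ, {ω | X ω ≤ x + 1 / (n + 1)} = {ω | X ω ≤ x} := by
    ext ω
    simp only [mem_iInter, mem_setOf_eq]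
    constructor
    · intro h
      by_contra hcon
      push_neg at hcon
      obtain ⟨n, hn⟩ := exists_nat_one_div_lt (sub_pos.mpr hcon)
      exact absurd (h n) (not_le.mpr (by linarith [hn]))
    · intro h n
      have : (0:ℝ) < 1 / (n + 1) := by positivity
      linarith
  have hanti : Antitone (fun n : ℕ => {ω | X ω ≤ x + 1 / ((n:ℝ) + 1)}) := by
    intro a b hab ω h
    simp only [mem_setOf_eq] at h ⊢
    have hba : ((a:ℝ) + 1) ≤ (b:ℝ) + 1 := by
      have : (a:ℝ) ≤ b := Nat.cast_le.mpr hab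
      linarith
    have : (1:ℝ) / (b + 1) ≤ 1 / (a + 1) := one_div_le_one_div_of_le (by positivity) hba
    linarith
  have ht : Tendsto (fun n : ℕ => μ {ω | X ω ≤ x + 1 / (n + 1)}) atTop
      (𝓝 (μ {ω | X ω ≤ x})) := by
    rw [← hset]
    exact tendsto_measure_iInter_atTop
      (fun n => (hX measurableSet_Iic).nullMeasurableSet) hanti ⟨0, measure_ne_top _ _⟩
  exact (ENNReal.tendsto_toReal (measure_ne_top _ _)).comp ht

lemma VaR_le_iff (hX : Measurable X) (hC : ∀ᵐ ω ∂μ, |X ω| ≤ C) {s x : ℝ}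
    (hs : 0 < s) (hs1 : s ≤ 1) :
    VaR μ X s ≤ x ↔ s ≤ F μ X x := by
  constructor
  · intro h
    have key : ∀ n : ℕ, s ≤ F μ X (x + 1 / (n + 1)) := by
      intro n
      have hlt : sInf {y : ℝ | s ≤ F μ X y} < x + 1 / (n + 1) :=
        lt_of_le_of_lt h (lt_add_of_pos_right x (by positivity))
      obtain ⟨y, hy, hylt⟩ := exists_lt_of_csInf_lt (nonempty_S hC hs1) hlt
      exact le_trans hy (F_mono (le_of_lt hylt))
    exact ge_of_tendsto (F_tendsto hX x) (Filter.Eventually.of_forall key)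
  · intro h
    exact csInf_le (bddBelow_S hC hs) h

/-- Monotone extension of `VaR` to all of `ℝ`. -/
noncomputable def Q (μ : Measure Ω) (X : Ω → ℝ) (C : ℝ) : ℝ → ℝ :=
  fun s => if s ≤ 0 then -C else VaR μ X (min s 1)

lemma Q_mono (hC : ∀ᵐ ω ∂μ, |X ω| ≤ C) : Monotone (Q μ X C) := by
  intro a b hab
  unfold Q
  by_cases ha : a ≤ 0
  · by_cases hb : b ≤ 0
    · simp [ha, hb]
    · push_neg at hb
      simp only [ha, if_pos, hb.not_ge, if_neg, if_false]
      exact neg_C_le_VaR hC (lt_min hb one_pos) (min_le_right _ _)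
  · have hb : ¬ b ≤ 0 := fun h => ha (le_trans hab h)
    push_neg at ha hb
    simp only [ha.not_ge, hb.not_ge, if_neg, if_false]
    exact VaR_mono hC (lt_min ha one_pos) (min_le_min hab le_rfl) (min_le_right _ _)

lemma Q_measurable (hC : ∀ᵐ ω ∂μ, |X ω| ≤ C) : Measurable (Q μ X C) :=
  (Q_mono hC).measurable

lemma Q_bound (hC : ∀ᵐ ω ∂μ, |X ω| ≤ C) (s : ℝ) : |Q μ X C s| ≤ C := by
  rw [abs_le]
  unfold Q
  by_cases hs : s ≤ 0
  · simp only [hs, if_pos]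
    exact ⟨le_refl _, by linarith [C_nonneg hC]⟩
  · push_neg at hs
    simp only [hs.not_ge, if_neg, if_false]
    exact ⟨neg_C_le_VaR hC (lt_min hs one_pos) (min_le_right _ _),
      VaR_le_C hC (lt_min hs one_pos) (min_le_right _ _)⟩

lemma Q_eq_VaR {s : ℝ} (hs : s ∈ Ioo (0:ℝ) 1) : Q μ X C s = VaR μ X s := by
  unfold Q
  rw [if_neg (not_le.mpr hs.1), min_eq_left hs.2.le]

lemma volume_Iic_inter {t : ℝ} (h0 : 0 ≤ t) (h1 : t ≤ 1) :
    volume (Iic t ∩ Ioo (0:ℝ) 1) = ENNReal.ofReal t := by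
  rcases eq_or_lt_of_le h1 with h | h
  · have : Iic t ∩ Ioo (0:ℝ) 1 = Ioo (0:ℝ) 1 := by
      apply inter_eq_self_of_subset_right
      intro s hs
      exact le_trans hs.2.le (le_of_eq h.symm)
    rw [this, Real.volume_Ioo, ← h]
    norm_num
  · have : Iic t ∩ Ioo (0:ℝ) 1 = Ioc (0:ℝ) t := by
      ext s
      simp only [mem_inter_iff, mem_Iic, mem_Ioo, mem_Ioc]
      constructor
      · rintro ⟨h1, h2, h3⟩; exact ⟨h2, h1⟩
      · rintro ⟨h1, h2⟩; exact ⟨h2, h1, lt_of_le_of_lt h2 h⟩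
    rw [this, Real.volume_Ioc]
    norm_num

lemma map_Q (hX : Measurable X) (hC : ∀ᵐ ω ∂μ, |X ω| ≤ C) :
    Measure.map (Q μ X C) (volume.restrict (Ioo 0 1)) = Measure.map X μ := by
  haveI h1 : IsProbabilityMeasure (volume.restrict (Ioo (0:ℝ) 1)) := by
    constructor
    rw [Measure.restrict_apply_univ, Real.volume_Ioo]
    norm_num
  haveI h2 : IsProbabilityMeasure (Measure.map (Q μ X C) (volume.restrict (Ioo (0:ℝ) 1))) :=
    Measure.isProbabilityMeasure_map (Q_measurable hC).aemeasurable
  refine MeasureTheory.Measure.ext_of_Iic _ _ (fun x => ?_)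
  rw [Measure.map_apply (Q_measurable hC) measurableSet_Iic,
      Measure.map_apply hX measurableSet_Iic,
      Measure.restrict_apply ((Q_measurable hC) measurableSet_Iic)]
  have hpre : Q μ X C ⁻¹' (Iic x) ∩ Ioo 0 1 = Iic (F μ X x) ∩ Ioo (0:ℝ) 1 := by
    ext s
    simp only [mem_inter_iff, mem_preimage, mem_Iic]
    constructor
    · rintro ⟨hq, hs⟩
      rw [Q_eq_VaR hs] at hq
      exact ⟨(VaR_le_iff hX hC hs.1 hs.2.le).mp hq, hs⟩
    · rintro ⟨hq, hs⟩
      rw [Q_eq_VaR hs]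
      exact ⟨(VaR_le_iff hX hC hs.1 hs.2.le).mpr hq, hs⟩
  rw [hpre, volume_Iic_inter (F_nonneg x) (F_le_one x)]
  have : X ⁻¹' Iic x = {ω | X ω ≤ x} := rfl
  rw [this, F, ENNReal.ofReal_toReal (measure_ne_top _ _)]

lemma integral_comp (hX : Measurable X) (hC : ∀ᵐ ω ∂μ, |X ω| ≤ C) {g : ℝ → ℝ}
    (hg : Measurable g) :
    ∫ ω, g (X ω) ∂μ = ∫ s in Ioo (0:ℝ) 1, g (VaR μ X s) := by
  have h1 : ∫ ω, g (X ω) ∂μ = ∫ y, g y ∂(Measure.map X μ) :=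
    (integral_map hX.aemeasurable hg.aestronglyMeasurable).symm
  rw [h1, ← map_Q hX hC,
    integral_map (Q_measurable hC).aemeasurable hg.aestronglyMeasurable]
  refine setIntegral_congr_fun measurableSet_Ioo (fun s hs => ?_)
  rw [Q_eq_VaR hs]

lemma integrableOn_VaR (hX : Measurable X) (hC : ∀ᵐ ω ∂μ, |X ω| ≤ C) :
    IntegrableOn (VaR μ X) (Ioo 0 1) volume := by
  have hQ : IntegrableOn (Q μ X C) (Ioo 0 1) volume := by
    have hconst : IntegrableOn (fun _ : ℝ => C) (Ioo 0 1) volume := by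
      refine integrableOn_const ?_
      rw [Real.volume_Ioo]; norm_num
    refine Integrable.mono' hconst ((Q_measurable hC).aestronglyMeasurable) ?_
    exact Filter.Eventually.of_forall fun s => by
      rw [Real.norm_eq_abs]; exact Q_bound hC s
  exact hQ.congr_fun (fun s hs => Q_eq_VaR hs) measurableSet_Ioo

lemma integrableOn_VaR_sub (hX : Measurable X) (hC : ∀ᵐ ω ∂μ, |X ω| ≤ C)
    {s : Set ℝ} (hs : s ⊆ Ioo 0 1) (hms : MeasurableSet s) :
    IntegrableOn (VaR μ X) s volume :=
  (integrableOn_VaR hX hC).mono_set hs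

lemma Ioc_subset (hp : p ∈ Ioo (0:ℝ) 1) : Ioc (0:ℝ) p ⊆ Ioo 0 1 :=
  fun s hs => ⟨hs.1, lt_of_le_of_lt hs.2 hp.2⟩

lemma Ioo_subset (hp : p ∈ Ioo (0:ℝ) 1) : Ioo p 1 ⊆ Ioo (0:ℝ) 1 :=
  fun s hs => ⟨lt_trans hp.1 hs.1, hs.2⟩

lemma split_integral (hp : p ∈ Ioo (0:ℝ) 1) {g : ℝ → ℝ}
    (hg : IntegrableOn g (Ioo 0 1) volume) :
    ∫ s in Ioo (0:ℝ) 1, g s = (∫ s in Ioc (0:ℝ) p, g s) + ∫ s in Ioo p 1, g s := by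
  have hu : Ioc (0:ℝ) p ∪ Ioo p 1 = Ioo (0:ℝ) 1 := Ioc_union_Ioo_eq_Ioo hp.1.le hp.2
  have hdis : Disjoint (Ioc (0:ℝ) p) (Ioo p 1) := by
    rw [Set.disjoint_left]
    rintro x ⟨_, h1⟩ ⟨h2, _⟩
    exact absurd h2 (not_lt.mpr h1)
  rw [← hu, setIntegral_union hdis measurableSet_Ioo
    (hg.mono_set (by rw [← hu]; exact subset_union_left))
    (hg.mono_set (by rw [← hu]; exact subset_union_right))]

lemma integrable_bdd {Z : Ω → ℝ} (hZ : AEStronglyMeasurable Z μ) {C : ℝ}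
    (hC : ∀ᵐ ω ∂μ, |Z ω| ≤ C) : Integrable Z μ :=
  (integrable_const C).mono' hZ (hC.mono fun ω h => by rwa [Real.norm_eq_abs])

lemma integrable_posPart (hX : Measurable X) (hC : ∀ᵐ ω ∂μ, |X ω| ≤ C) (a : ℝ) :
    Integrable (fun ω => max (X ω - a) 0) μ := by
  refine integrable_bdd ((hX.sub measurable_const).max measurable_const).aestronglyMeasurable
    (C := C + |a|) (hC.mono fun ω h => ?_)
  rw [abs_le]
  have h1 := abs_le.mp h
  have h2 := abs_nonneg a
  have h3 := neg_abs_le a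
  have h4 := le_max_right (X ω - a) 0
  constructor
  · linarith
  · rw [max_le_iff]
    constructor <;> linarith

lemma intOn_const (c : ℝ) {s : Set ℝ} (hs : volume s < ⊤) :
    IntegrableOn (fun _ : ℝ => c) s volume :=
  integrableOn_const hs.ne

lemma vol_Ioo_lt {a b : ℝ} : volume (Ioo a b) < ⊤ := by
  rw [Real.volume_Ioo]; exact ENNReal.ofReal_lt_top

lemma vol_Ioc_lt {a b : ℝ} : volume (Ioc a b) < ⊤ := by
  rw [Real.volume_Ioc]; exact ENNReal.ofReal_lt_top

/-- Rockafellar–Uryasev equality at the quantile. -/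
lemma RU_eq (hX : Measurable X) (hC : ∀ᵐ ω ∂μ, |X ω| ≤ C) (hp : p ∈ Ioo (0:ℝ) 1) :
    ∫ s in Ioo p 1, VaR μ X s
      = (1 - p) * VaR μ X p + ∫ ω, max (X ω - VaR μ X p) 0 ∂μ := by
  set q := VaR μ X p with hq
  have hg : Measurable (fun x : ℝ => max (x - q) 0) :=
    (measurable_id.sub_const q).max measurable_const
  have h0 : ∫ ω, max (X ω - q) 0 ∂μ = ∫ s in Ioo (0:ℝ) 1, max (VaR μ X s - q) 0 :=
    integral_comp hX hC hg
  have hGint : IntegrableOn (fun s => max (VaR μ X s - q) 0) (Ioo 0 1) volume := by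
    have := ((integrableOn_VaR hX hC).sub (intOn_const q vol_Ioo_lt)).pos_part
    simpa [IntegrableOn] using this
  have hsplit := split_integral hp hGint
  have hzero : ∫ s in Ioc (0:ℝ) p, max (VaR μ X s - q) 0 = 0 := by
    rw [setIntegral_congr_fun measurableSet_Ioc (g := fun _ => (0:ℝ))
      (fun s hs => max_eq_right (sub_nonpos.mpr (VaR_mono hC hs.1 hs.2 hp.2.le)))]
    simp
  have heq2 : ∫ s in Ioo p 1, max (VaR μ X s - q) 0 = ∫ s in Ioo p 1, (VaR μ X s - q) := by
    refine setIntegral_congr_fun measurableSet_Ioo (fun s hs => ?_)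
    exact max_eq_left (sub_nonneg.mpr (VaR_mono hC hp.1 hs.1.le hs.2.le))
  have hsub : ∫ s in Ioo p 1, (VaR μ X s - q)
      = (∫ s in Ioo p 1, VaR μ X s) - (1 - p) * q := by
    rw [integral_sub (integrableOn_VaR_sub hX hC (Ioo_subset hp) measurableSet_Ioo)
      (intOn_const _ vol_Ioo_lt)]
    rw [setIntegral_const, Real.volume_real_Ioo,
      max_eq_left (by linarith [hp.2] : (0:ℝ) ≤ 1 - p), smul_eq_mul]
  rw [h0, hsplit, hzero, heq2, hsub]
  ring

/-- Rockafellar–Uryasev inequality. -/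
lemma RU_le (hX : Measurable X) (hC : ∀ᵐ ω ∂μ, |X ω| ≤ C) (hp : p ∈ Ioo (0:ℝ) 1) (t : ℝ) :
    ∫ s in Ioo p 1, VaR μ X s ≤ (1 - p) * t + ∫ ω, max (X ω - t) 0 ∂μ := by
  have hg : Measurable (fun x : ℝ => max (x - t) 0) :=
    (measurable_id.sub_const t).max measurable_const
  have h0 : ∫ ω, max (X ω - t) 0 ∂μ = ∫ s in Ioo (0:ℝ) 1, max (VaR μ X s - t) 0 :=
    integral_comp hX hC hg
  have hGint : IntegrableOn (fun s => max (VaR μ X s - t) 0) (Ioo 0 1) volume := by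
    have := ((integrableOn_VaR hX hC).sub (intOn_const t vol_Ioo_lt)).pos_part
    simpa [IntegrableOn] using this
  have h1 : ∫ s in Ioo p 1, (VaR μ X s - t) ≤ ∫ s in Ioo p 1, max (VaR μ X s - t) 0 := by
    refine setIntegral_mono_on
      ((integrableOn_VaR_sub hX hC (Ioo_subset hp) measurableSet_Ioo).sub
        (intOn_const t vol_Ioo_lt))
      (hGint.mono_set (Ioo_subset hp)) measurableSet_Ioo ?_
    exact fun s _ => le_max_left _ _
  have h2 : ∫ s in Ioo p 1, max (VaR μ X s - t) 0
      ≤ ∫ s in Ioo (0:ℝ) 1, max (VaR μ X s - t) 0 := by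
    refine setIntegral_mono_set hGint ?_ (HasSubset.Subset.eventuallyLE (Ioo_subset hp))
    exact Filter.Eventually.of_forall fun s => le_max_right _ _
  have h3 : ∫ s in Ioo p 1, (VaR μ X s - t)
      = (∫ s in Ioo p 1, VaR μ X s) - (1 - p) * t := by
    rw [integral_sub (integrableOn_VaR_sub hX hC (Ioo_subset hp) measurableSet_Ioo)
      (intOn_const _ vol_Ioo_lt)]
    rw [setIntegral_const, Real.volume_real_Ioo,
      max_eq_left (by linarith [hp.2] : (0:ℝ) ≤ 1 - p), smul_eq_mul]
  rw [h0]
  linarith [h1, h2, h3.symm.le, h3.le]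

lemma mean_eq (hX : Measurable X) (hC : ∀ᵐ ω ∂μ, |X ω| ≤ C) :
    ∫ ω, X ω ∂μ = ∫ s in Ioo (0:ℝ) 1, VaR μ X s :=
  integral_comp hX hC measurable_id

lemma mean_le (hX : Measurable X) (hC : ∀ᵐ ω ∂μ, |X ω| ≤ C) (hp : p ∈ Ioo (0:ℝ) 1) :
    (1 - p) * ∫ ω, X ω ∂μ ≤ ∫ s in Ioo p 1, VaR μ X s := by
  set q := VaR μ X p with hqdef
  rw [mean_eq hX hC, split_integral hp (integrableOn_VaR hX hC)]
  have h1 : ∫ s in Ioc (0:ℝ) p, VaR μ X s ≤ p * q := by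
    have : ∫ s in Ioc (0:ℝ) p, VaR μ X s ≤ ∫ s in Ioc (0:ℝ) p, q := by
      refine setIntegral_mono_on
        (integrableOn_VaR_sub hX hC (Ioc_subset hp) measurableSet_Ioc)
        (intOn_const q vol_Ioc_lt) measurableSet_Ioc ?_
      exact fun s hs => VaR_mono hC hs.1 hs.2 hp.2.le
    rw [setIntegral_const, Real.volume_real_Ioc] at this
    rw [show p - 0 = p by ring, max_eq_left hp.1.le, smul_eq_mul] at this
    exact this
  have h2 : (1 - p) * q ≤ ∫ s in Ioo p 1, VaR μ X s := by
    have : ∫ s in Ioo p 1, q ≤ ∫ s in Ioo p 1, VaR μ X s := by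
      refine setIntegral_mono_on (intOn_const q vol_Ioo_lt)
        (integrableOn_VaR_sub hX hC (Ioo_subset hp) measurableSet_Ioo)
        measurableSet_Ioo ?_
      exact fun s hs => VaR_mono hC hp.1 hs.1.le hs.2.le
    rw [setIntegral_const, Real.volume_real_Ioo,
      max_eq_left (by linarith [hp.2] : (0:ℝ) ≤ 1 - p), smul_eq_mul] at this
    exact this
  have hp0 := hp.1
  have hp1 := hp.2
  nlinarith [mul_le_mul_of_nonneg_left h2 hp.1.le,
    mul_le_mul_of_nonneg_left h1 (by linarith : (0:ℝ) ≤ 1 - p)]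

lemma subadd (hX : Measurable X) (hY : Measurable Y) (hCX : ∀ᵐ ω ∂μ, |X ω| ≤ C)
    (hCY : ∀ᵐ ω ∂μ, |Y ω| ≤ D) (hp : p ∈ Ioo (0:ℝ) 1) :
    ∫ s in Ioo p 1, VaR μ (X + Y) s
      ≤ (∫ s in Ioo p 1, VaR μ X s) + ∫ s in Ioo p 1, VaR μ Y s := by
  set a := VaR μ X p
  set b := VaR μ Y p
  have hZ : Measurable (X + Y) := hX.add hY
  have hCZ : ∀ᵐ ω ∂μ, |(X + Y) ω| ≤ C + D := by
    filter_upwards [hCX, hCY] with ω h1 h2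
    calc |(X + Y) ω| = |X ω + Y ω| := by simp
    _ ≤ |X ω| + |Y ω| := abs_add_le _ _
    _ ≤ C + D := add_le_add h1 h2
  have step1 := RU_le hZ hCZ hp (a + b)
  have step2 : ∫ ω, max ((X + Y) ω - (a + b)) 0 ∂μ
      ≤ (∫ ω, max (X ω - a) 0 ∂μ) + ∫ ω, max (Y ω - b) 0 ∂μ := by
    rw [← integral_add (integrable_posPart hX hCX a) (integrable_posPart hY hCY b)]
    refine integral_mono (integrable_posPart hZ hCZ (a + b))
      ((integrable_posPart hX hCX a).add (integrable_posPart hY hCY b)) ?_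
    intro ω
    simp only [Pi.add_apply]
    refine max_le (by
      have := le_max_left (X ω - a) 0
      have := le_max_left (Y ω - b) 0
      linarith) (by
      have := le_max_right (X ω - a) 0
      have := le_max_right (Y ω - b) 0
      linarith)
  rw [RU_eq hX hCX hp, RU_eq hY hCY hp]
  linarith

lemma F_congr (h : X =ᵐ[μ] Y) : F μ X = F μ Y := by
  funext x
  unfold F
  have heq : {ω | X ω ≤ x} =ᵐ[μ] {ω | Y ω ≤ x} := h.mono fun ω hω => by
    show (X ω ≤ x) = (Y ω ≤ x)
    rw [hω]
  rw [measure_congr heq]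

lemma VaR_congr (h : X =ᵐ[μ] Y) : VaR μ X = VaR μ Y := by
  funext s
  rw [VaR_eq_sInf, VaR_eq_sInf, F_congr h]

lemma F_ident (hX : Measurable X) (hY : Measurable Y) (h : IdentDistrib X Y μ μ) :
    F μ X = F μ Y := by
  funext x
  unfold F
  have h1 : μ {ω | X ω ≤ x} = Measure.map X μ (Iic x) :=
    (Measure.map_apply hX measurableSet_Iic).symm
  have h2 : μ {ω | Y ω ≤ x} = Measure.map Y μ (Iic x) :=
    (Measure.map_apply hY measurableSet_Iic).symm
  rw [h1, h2, h.map_eq]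

lemma VaR_ident (hX : Measurable X) (hY : Measurable Y) (h : IdentDistrib X Y μ μ) :
    VaR μ X = VaR μ Y := by
  funext s
  rw [VaR_eq_sInf, VaR_eq_sInf, F_ident hX hY h]

/-- Key identity: on a `p`-tail event, `∫ VaR = ∫_A Z`. -/
lemma tail_eq (hZ : Measurable Z) (hC : ∀ᵐ ω ∂μ, |Z ω| ≤ C) (hp : p ∈ Ioo (0:ℝ) 1)
    {A : Set Ω} (hA : IsPTailEvent μ p Z A) :
    ∫ s in Ioo p 1, VaR μ Z s = ∫ ω in A, Z ω ∂μ := by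
  obtain ⟨⟨hAm, hA0, hA1, htail⟩, hμA⟩ := hA
  have hp1 : (0:ℝ) ≤ 1 - p := by linarith [hp.2]
  have hμAc : μ Aᶜ = ENNReal.ofReal p := by
    rw [prob_compl_eq_one_sub hAm, hμA]
    rw [show (1 : ℝ≥0∞) = ENNReal.ofReal p + ENNReal.ofReal (1 - p) by
      rw [← ENNReal.ofReal_add hp.1.le hp1]; norm_num]
    rw [ENNReal.add_sub_cancel_right ENNReal.ofReal_ne_top]
  set q := VaR μ Z p with hqdef
  have hFq : p ≤ F μ Z q := (VaR_le_iff hZ hC hp.1 hp.2.le).mp le_rfl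
  -- key dichotomy
  have K1 : ∀ x : ℝ, μ (A ∩ {ω | Z ω ≤ x}) = 0 ∨ μ (Aᶜ ∩ {ω | x < Z ω}) = 0 := by
    intro x
    by_cases h : μ (A ∩ {ω | Z ω ≤ x}) = 0
    · exact Or.inl h
    · right
      rw [ae_restrict_iff' hAm] at htail
      set N := {ω | ¬ (ω ∈ A → ∀ᵐ ω' ∂μ.restrict Aᶜ, Z ω' ≤ Z ω)} with hN
      have hNnull : μ N = 0 := htail
      have hBN : μ ((A ∩ {ω | Z ω ≤ x}) \ N) ≠ 0 := by
        rwa [measure_diff_null hNnull]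
      obtain ⟨ω₀, hω₀⟩ := nonempty_of_measure_ne_zero hBN
      obtain ⟨⟨hω₀A, hω₀x⟩, hω₀N⟩ := hω₀
      have hinner : ∀ᵐ ω' ∂μ.restrict Aᶜ, Z ω' ≤ Z ω₀ := by
        by_contra hcon
        exact hω₀N (fun h' => hcon (h' hω₀A))
      rw [ae_restrict_iff' hAm.compl] at hinner
      have : Aᶜ ∩ {ω | x < Z ω} ⊆ {ω | ¬ (ω ∈ Aᶜ → Z ω ≤ Z ω₀)} := by
        rintro ω ⟨h1, h2⟩
        intro hcon
        have := hcon h1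
        have hxω : x < Z ω := h2
        have : Z ω ≤ x := le_trans (hcon h1) hω₀x
        exact absurd hxω (not_lt.mpr this)
      exact measure_mono_null this hinner
  -- decomposition of Aᶜ measure
  have hdecomp : ∀ x : ℝ, μ (Aᶜ ∩ {ω | Z ω ≤ x}) + μ (Aᶜ ∩ {ω | x < Z ω}) = μ Aᶜ := by
    intro x
    have h1 : Aᶜ ∩ {ω | x < Z ω} = Aᶜ \ {ω | Z ω ≤ x} := by
      ext ω
      simp only [mem_inter_iff, mem_diff, mem_setOf_eq, mem_compl_iff, not_le]
    have hms : MeasurableSet {ω | Z ω ≤ x} := hZ measurableSet_Iic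
    rw [h1, measure_inter_add_diff Aᶜ hms]
  -- (a): a.e. on Aᶜ, Z ≤ q
  have ha : μ (Aᶜ ∩ {ω | q < Z ω}) = 0 := by
    rcases K1 q with h | h
    · -- A-part null; then Aᶜ ∩ {Z ≤ q} has full measure p, so upper part null
      have hq1 : ENNReal.ofReal p ≤ μ {ω | Z ω ≤ q} :=
        ENNReal.ofReal_le_of_le_toReal hFq
      have hsub : μ {ω | Z ω ≤ q} ≤ μ (A ∩ {ω | Z ω ≤ q}) + μ (Aᶜ ∩ {ω | Z ω ≤ q}) := by
        refine le_trans (measure_mono ?_) (measure_union_le _ _)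
        intro ω hω
        by_cases hA : ω ∈ A
        · exact Or.inl ⟨hA, hω⟩
        · exact Or.inr ⟨hA, hω⟩
      rw [h, zero_add] at hsub
      have hle : ENNReal.ofReal p ≤ μ (Aᶜ ∩ {ω | Z ω ≤ q}) := le_trans hq1 hsub
      have hsum := hdecomp q
      rw [hμAc] at hsum
      by_contra hne
      have hlt : ENNReal.ofReal p < μ (Aᶜ ∩ {ω | Z ω ≤ q}) + μ (Aᶜ ∩ {ω | q < Z ω}) := by
        calc ENNReal.ofReal p < ENNReal.ofReal p + μ (Aᶜ ∩ {ω | q < Z ω}) :=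
          ENNReal.lt_add_right ENNReal.ofReal_ne_top hne
        _ ≤ _ := add_le_add hle le_rfl
      rw [hsum] at hlt
      exact absurd hlt (lt_irrefl _)
    · exact h
  -- (b): a.e. on A, Z ≥ q
  have hb : μ (A ∩ {ω | Z ω < q}) = 0 := by
    by_contra hne
    have hunion : A ∩ {ω | Z ω < q} = ⋃ n : ℕ, A ∩ {ω | Z ω ≤ q - 1 / (n + 1)} := by
      ext ω
      simp only [mem_inter_iff, mem_iUnion, mem_setOf_eq]
      constructor
      · rintro ⟨h1, h2⟩
        obtain ⟨n, hn⟩ := exists_nat_one_div_lt (sub_pos.mpr h2)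
        exact ⟨n, h1, by push_cast at hn ⊢; linarith⟩
      · rintro ⟨n, h1, h2⟩
        have : (0:ℝ) < 1 / ((n:ℝ) + 1) := by positivity
        exact ⟨h1, by linarith⟩
    have : ∃ n : ℕ, μ (A ∩ {ω | Z ω ≤ q - 1 / (n + 1)}) ≠ 0 := by
      by_contra hall
      push_neg at hall
      rw [hunion] at hne
      exact hne (measure_iUnion_null hall)
    obtain ⟨n, hn⟩ := this
    set x := q - 1 / ((n:ℝ) + 1) with hx
    have hxq : x < q := by
      have : (0:ℝ) < 1 / ((n:ℝ) + 1) := by positivity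
      rw [hx]; linarith
    rcases K1 x with h | h
    · exact hn h
    · -- then μ {Z ≤ x} ≥ p, so q ≤ x, contradiction
      have hsum := hdecomp x
      rw [h, add_zero, hμAc] at hsum
      have h2 : ENNReal.ofReal p ≤ μ {ω | Z ω ≤ x} := by
        rw [← hsum]
        exact measure_mono fun ω hω => hω.2
      have h3 : p ≤ F μ Z x := by
        have := ENNReal.toReal_mono (measure_ne_top _ _) h2
        rwa [ENNReal.toReal_ofReal hp.1.le] at this
      have : q ≤ x := csInf_le (bddBelow_S hC hp.1) h3
      exact absurd hxq (not_lt.mpr this)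
  -- a.e. identity: (Z - q)⁺ = indicator A (Z - q)
  have h1ae : ∀ᵐ ω ∂μ, ω ∉ Aᶜ ∩ {ω | q < Z ω} := by
    rw [ae_iff]
    exact measure_mono_null (fun ω h => not_not.mp h) ha
  have h2ae : ∀ᵐ ω ∂μ, ω ∉ A ∩ {ω | Z ω < q} := by
    rw [ae_iff]
    exact measure_mono_null (fun ω h => not_not.mp h) hb
  have hind : (fun ω => max (Z ω - q) 0) =ᵐ[μ] A.indicator (fun ω => Z ω - q) := by
    filter_upwards [h1ae, h2ae] with ω hω1 hω2
    by_cases hωA : ω ∈ A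
    · have hZq : ¬ Z ω < q := fun hcon => hω2 ⟨hωA, hcon⟩
      rw [indicator_of_mem hωA, max_eq_left (by linarith [not_lt.mp hZq])]
    · have hZq : ¬ q < Z ω := fun hcon => hω1 ⟨hωA, hcon⟩
      rw [indicator_of_notMem hωA, max_eq_right (by linarith [not_lt.mp hZq])]
  have hμAr : (μ A).toReal = 1 - p := by
    rw [hμA, ENNReal.toReal_ofReal hp1]
  have hZint : Integrable Z μ := integrable_bdd hZ.aestronglyMeasurable hC
  have hint : ∫ ω, max (Z ω - q) 0 ∂μ = (∫ ω in A, Z ω ∂μ) - (1 - p) * q := by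
    rw [integral_congr_ae hind, integral_indicator hAm]
    rw [integral_sub (hZint.restrict (s := A)) (integrableOn_const
      (lt_of_le_of_lt prob_le_one ENNReal.one_lt_top).ne)]
    rw [setIntegral_const, measureReal_def, hμAr, smul_eq_mul]
  rw [RU_eq hZ hC hp, hint]
  ring

lemma tail_sum {X' Y' : Ω → ℝ} {A : Set Ω} (hA : IsPTailEvent μ p X' A)
    (hB : IsPTailEvent μ p Y' A) : IsPTailEvent μ p (X' + Y') A := by
  obtain ⟨⟨hm, h0, h1, hx⟩, hμ⟩ := hA
  obtain ⟨⟨_, _, _, hy⟩, _⟩ := hB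
  refine ⟨⟨hm, h0, h1, ?_⟩, hμ⟩
  filter_upwards [hx, hy] with ω h1 h2
  filter_upwards [h1, h2] with ω' g1 g2
  simpa using add_le_add g1 g2

lemma tail_congr {A : Set Ω} (h : X =ᵐ[μ] Y) (hA : IsPTailEvent μ p X A) :
    IsPTailEvent μ p Y A := by
  obtain ⟨⟨hm, h0, h1, hx⟩, hμ⟩ := hA
  refine ⟨⟨hm, h0, h1, ?_⟩, hμ⟩
  have hA1 : X =ᵐ[μ.restrict A] Y := ae_restrict_of_ae h
  have hA2 : X =ᵐ[μ.restrict Aᶜ] Y := ae_restrict_of_ae h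
  filter_upwards [hx, hA1] with ω hω hXω
  filter_upwards [hω, hA2] with ω' hω' hXω'
  rw [← hXω, ← hXω']
  exact hω'

lemma exists_bound (h : MemLp X ⊤ μ) : ∃ C : ℝ, ∀ᵐ ω ∂μ, |X ω| ≤ C := by
  refine ⟨(eLpNormEssSup X μ).toReal, ?_⟩
  have hfin : eLpNormEssSup X μ ≠ ⊤ := by
    have := h.2
    rw [eLpNorm_exponent_top] at this
    exact this.ne
  filter_upwards [ae_le_eLpNormEssSup (f := X) (μ := μ)] with ω hω
  have := ENNReal.toReal_mono hfin hω
  rwa [toReal_enorm, Real.norm_eq_abs] at this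

end S18

/-- `ρ = f(ES_p, E)` with `f` increasing in its first argument on
`H = {(x,y) : x ≥ y}` satisfies `p`-concentration aversion. -/
theorem stmt18 (μ : Measure Ω) [IsProbabilityMeasure μ] (p : ℝ) (hp : p ∈ Set.Ioo (0:ℝ) 1)
    (f : ℝ → ℝ → ℝ)
    (hf : ∀ x x' y : ℝ, y ≤ x → x ≤ x' → f x y ≤ f x' y) :
    ∀ X Y X' Y' : Ω → ℝ, MemLp X ⊤ μ → MemLp Y ⊤ μ → MemLp X' ⊤ μ → MemLp Y' ⊤ μ →
      IdentDistrib X X' μ μ → IdentDistrib Y Y' μ μ → PConcentrated μ p X' Y' →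
      f (ES μ (X + Y) p) (∫ ω, (X + Y) ω ∂μ) ≤
        f (ES μ (X' + Y') p) (∫ ω, (X' + Y') ω ∂μ) := by
  intro X Y X' Y' hX hY hX' hY' hXX' hYY' hcon
  obtain ⟨A, hAX', hAY'⟩ := hcon
  have h1p : (0:ℝ) < 1 - p := by linarith [hp.2]
  obtain ⟨CX, hCX⟩ := S18.exists_bound hX
  obtain ⟨CY, hCY⟩ := S18.exists_bound hY
  obtain ⟨CX', hCX'⟩ := S18.exists_bound hX'
  obtain ⟨CY', hCY'⟩ := S18.exists_bound hY'
  -- measurable representatives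
  set X₁ := hX.1.mk X with hX₁def
  set Y₁ := hY.1.mk Y with hY₁def
  set X₂ := hX'.1.mk X' with hX₂def
  set Y₂ := hY'.1.mk Y' with hY₂def
  have hX₁m : Measurable X₁ := hX.1.stronglyMeasurable_mk.measurable
  have hY₁m : Measurable Y₁ := hY.1.stronglyMeasurable_mk.measurable
  have hX₂m : Measurable X₂ := hX'.1.stronglyMeasurable_mk.measurable
  have hY₂m : Measurable Y₂ := hY'.1.stronglyMeasurable_mk.measurable
  have hX₁e : X =ᵐ[μ] X₁ := hX.1.ae_eq_mk
  have hY₁e : Y =ᵐ[μ] Y₁ := hY.1.ae_eq_mk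
  have hX₂e : X' =ᵐ[μ] X₂ := hX'.1.ae_eq_mk
  have hY₂e : Y' =ᵐ[μ] Y₂ := hY'.1.ae_eq_mk
  have hCX₁ : ∀ᵐ ω ∂μ, |X₁ ω| ≤ CX := by
    filter_upwards [hCX, hX₁e] with ω h1 h2; rwa [← h2]
  have hCY₁ : ∀ᵐ ω ∂μ, |Y₁ ω| ≤ CY := by
    filter_upwards [hCY, hY₁e] with ω h1 h2; rwa [← h2]
  have hCX₂ : ∀ᵐ ω ∂μ, |X₂ ω| ≤ CX' := by
    filter_upwards [hCX', hX₂e] with ω h1 h2; rwa [← h2]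
  have hCY₂ : ∀ᵐ ω ∂μ, |Y₂ ω| ≤ CY' := by
    filter_upwards [hCY', hY₂e] with ω h1 h2; rwa [← h2]
  have hsum1e : X + Y =ᵐ[μ] X₁ + Y₁ := hX₁e.add hY₁e
  have hsum2e : X' + Y' =ᵐ[μ] X₂ + Y₂ := hX₂e.add hY₂e
  have hsum1m : Measurable (X₁ + Y₁) := hX₁m.add hY₁m
  have hsum2m : Measurable (X₂ + Y₂) := hX₂m.add hY₂m
  have hCsum1 : ∀ᵐ ω ∂μ, |(X₁ + Y₁) ω| ≤ CX + CY := by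
    filter_upwards [hCX₁, hCY₁] with ω g1 g2
    calc |(X₁ + Y₁) ω| = |X₁ ω + Y₁ ω| := by simp
    _ ≤ |X₁ ω| + |Y₁ ω| := abs_add_le _ _
    _ ≤ CX + CY := add_le_add g1 g2
  have hCsum2 : ∀ᵐ ω ∂μ, |(X₂ + Y₂) ω| ≤ CX' + CY' := by
    filter_upwards [hCX₂, hCY₂] with ω g1 g2
    calc |(X₂ + Y₂) ω| = |X₂ ω + Y₂ ω| := by simp
    _ ≤ |X₂ ω| + |Y₂ ω| := abs_add_le _ _
    _ ≤ CX' + CY' := add_le_add g1 g2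
  -- identical distribution of representatives
  have hid1 : IdentDistrib X₁ X₂ μ μ :=
    ⟨hX₁m.aemeasurable, hX₂m.aemeasurable, by
      rw [← Measure.map_congr hX₁e, ← Measure.map_congr hX₂e]; exact hXX'.map_eq⟩
  have hid2 : IdentDistrib Y₁ Y₂ μ μ :=
    ⟨hY₁m.aemeasurable, hY₂m.aemeasurable, by
      rw [← Measure.map_congr hY₁e, ← Measure.map_congr hY₂e]; exact hYY'.map_eq⟩
  -- tail events of the representatives
  have hAX₂ : IsPTailEvent μ p X₂ A := S18.tail_congr hX₂e hAX'
  have hAY₂ : IsPTailEvent μ p Y₂ A := S18.tail_congr hY₂e hAY'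
  have hAsum : IsPTailEvent μ p (X₂ + Y₂) A := S18.tail_sum hAX₂ hAY₂
  -- integral-level chain
  have hIsum1 : ∫ s in Set.Ioo p 1, VaR μ (X + Y) s
      = ∫ s in Set.Ioo p 1, VaR μ (X₁ + Y₁) s := by
    rw [S18.VaR_congr hsum1e]
  have hIsum2 : ∫ s in Set.Ioo p 1, VaR μ (X' + Y') s
      = ∫ s in Set.Ioo p 1, VaR μ (X₂ + Y₂) s := by
    rw [S18.VaR_congr hsum2e]
  have hsubadd := S18.subadd hX₁m hY₁m hCX₁ hCY₁ hp
  have hX12 : ∫ s in Set.Ioo p 1, VaR μ X₁ s = ∫ s in Set.Ioo p 1, VaR μ X₂ s := by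
    rw [S18.VaR_ident hX₁m hX₂m hid1]
  have hY12 : ∫ s in Set.Ioo p 1, VaR μ Y₁ s = ∫ s in Set.Ioo p 1, VaR μ Y₂ s := by
    rw [S18.VaR_ident hY₁m hY₂m hid2]
  have htX : ∫ s in Set.Ioo p 1, VaR μ X₂ s = ∫ ω in A, X₂ ω ∂μ :=
    S18.tail_eq hX₂m hCX₂ hp hAX₂
  have htY : ∫ s in Set.Ioo p 1, VaR μ Y₂ s = ∫ ω in A, Y₂ ω ∂μ :=
    S18.tail_eq hY₂m hCY₂ hp hAY₂
  have htS : ∫ s in Set.Ioo p 1, VaR μ (X₂ + Y₂) s = ∫ ω in A, (X₂ + Y₂) ω ∂μ :=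
    S18.tail_eq hsum2m hCsum2 hp hAsum
  have hintX₂ : Integrable X₂ μ := S18.integrable_bdd hX₂m.aestronglyMeasurable hCX₂
  have hintY₂ : Integrable Y₂ μ := S18.integrable_bdd hY₂m.aestronglyMeasurable hCY₂
  have hsplitA : ∫ ω in A, (X₂ + Y₂) ω ∂μ = (∫ ω in A, X₂ ω ∂μ) + ∫ ω in A, Y₂ ω ∂μ := by
    simp only [Pi.add_apply]
    exact integral_add (hintX₂.restrict (s := A)) (hintY₂.restrict (s := A))
  -- combine at integral level
  have hmain : ∫ s in Set.Ioo p 1, VaR μ (X + Y) s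
      ≤ ∫ s in Set.Ioo p 1, VaR μ (X' + Y') s := by
    rw [hIsum1, hIsum2, htS, hsplitA]
    calc ∫ s in Set.Ioo p 1, VaR μ (X₁ + Y₁) s
        ≤ (∫ s in Set.Ioo p 1, VaR μ X₁ s) + ∫ s in Set.Ioo p 1, VaR μ Y₁ s := hsubadd
    _ = (∫ ω in A, X₂ ω ∂μ) + ∫ ω in A, Y₂ ω ∂μ := by rw [hX12, hY12, htX, htY]
  -- ES-level inequality
  have hES : ES μ (X + Y) p ≤ ES μ (X' + Y') p := by
    unfold ES
    exact mul_le_mul_of_nonneg_left hmain (inv_nonneg.mpr h1p.le)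
  -- means agree
  have hintX : Integrable X μ := S18.integrable_bdd hX.1 hCX
  have hintY : Integrable Y μ := S18.integrable_bdd hY.1 hCY
  have hintX' : Integrable X' μ := S18.integrable_bdd hX'.1 hCX'
  have hintY' : Integrable Y' μ := S18.integrable_bdd hY'.1 hCY'
  have hmean_eq : ∫ ω, (X + Y) ω ∂μ = ∫ ω, (X' + Y') ω ∂μ := by
    simp only [Pi.add_apply]
    rw [integral_add hintX hintY, integral_add hintX' hintY',
      hXX'.integral_eq, hYY'.integral_eq]
  -- mean ≤ ES for X + Y
  have hmean_le : ∫ ω, (X + Y) ω ∂μ ≤ ES μ (X + Y) p := by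
    have h1 : ∫ ω, (X + Y) ω ∂μ = ∫ ω, (X₁ + Y₁) ω ∂μ := integral_congr_ae hsum1e
    have h2 := S18.mean_le hsum1m hCsum1 hp
    unfold ES
    rw [h1, hIsum1]
    rw [← mul_le_mul_iff_right₀ h1p, ← mul_assoc, mul_inv_cancel₀ h1p.ne', one_mul]
    exact h2
  rw [← hmean_eq]
  exact hf _ _ _ hmean_le hES
end

section
/- Let p ∈ (0,1/2], a ≥ b ≥ 0, y ∈ ℝ, U uniform on (0,1), X ~ p·δ_{-(1-p)a} + (1-p)·δ_{pa}, Y ~ (1-p)·δ_{-pb+y} + p·δ_{(1-p)b+y}, and set X_1 = X_2 = F_X^{-1}(U), Y_1 = F_Y^{-1}(U), Y_2 = F_Y^{-1}(1-U). Then E[X_1+Y_1] = E[X_2+Y_2] = y, ES_p(X_1+Y_1) = p(a-b) + pb/(1-p) + y, and ES_p(X_2+Y_2) = p(a-b) + y. -/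
open MeasureTheory ProbabilityTheory Filter
open scoped Classical

variable {Ω : Type*} [MeasurableSpace Ω]

lemma step_integrableOn (l r t c d : ℝ) :
    IntegrableOn (fun u => if u ≤ t then c else d) (Set.Ioo l r) volume := by
  apply Integrable.mono' (g := fun _ => |c| + |d|)
  · exact (integrableOn_const_iff (C := |c| + |d|)).mpr (Or.inr (by rw [Real.volume_Ioo]; exact ENNReal.ofReal_lt_top))
  · exact (measurable_const.ite measurableSet_Iic measurable_const).aestronglyMeasurable
  · filter_upwards with u
    rcases le_or_gt u t with h | h
    · simp only [if_pos h, Real.norm_eq_abs]; linarith [abs_nonneg d, le_abs_self c]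
    · simp only [if_neg (not_le.mpr h), Real.norm_eq_abs]; linarith [abs_nonneg c, le_abs_self d]

lemma step_intOn (l t r c d : ℝ) (hlt : l ≤ t) (htr : t < r) :
    ∫ u in Set.Ioo l r, (if u ≤ t then c else d) = (t - l) * c + (r - t) * d := by
  rw [← Set.Ioc_union_Ioo_eq_Ioo hlt htr]
  rw [setIntegral_union (by rw [Set.disjoint_left]; intro x hx hx'; exact absurd hx.2 (not_le.mpr hx'.1))
    measurableSet_Ioo
    ((step_integrableOn l (t+1) t c d).mono_set (fun x hx => ⟨hx.1, by linarith [hx.2]⟩))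
    (step_integrableOn t r t c d)]
  rw [setIntegral_congr_fun measurableSet_Ioc (g := fun _ => c) (fun x hx => if_pos hx.2),
    setIntegral_congr_fun measurableSet_Ioo (g := fun _ => d) (fun x hx => if_neg (not_le.mpr hx.1)),
    setIntegral_const, setIntegral_const, Real.volume_real_Ioc_of_le hlt, Real.volume_real_Ioo_of_le htr.le]
  simp [smul_eq_mul]

lemma VaR_eq_of (μ : Measure Ω) (Z : Ω → ℝ) {s q α : ℝ}
    (hα : α < s)
    (hlow : ∀ x, x < q → (μ {ω | Z ω ≤ x}).toReal ≤ α)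
    (hhigh : ∀ x, q ≤ x → s ≤ (μ {ω | Z ω ≤ x}).toReal) :
    VaR μ Z s = q := by
  have h : {x : ℝ | s ≤ (μ {ω | Z ω ≤ x}).toReal} = Set.Ici q := by
    ext x
    simp only [Set.mem_setOf_eq, Set.mem_Ici]
    constructor
    · intro h
      by_contra hx
      exact absurd h (not_le.mpr (lt_of_le_of_lt (hlow x (not_le.mp hx)) hα))
    · exact hhigh x
  rw [VaR, h, csInf_Ici]


set_option maxHeartbeats 1000000 in
/-- explicit mean and `ES_p` computations for the two-point
constructions used in the proof of the main characterization theorem. -/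
theorem stmt19 (μ : Measure Ω) [IsProbabilityMeasure μ]
    (p : ℝ) (hp0 : 0 < p) (hp2 : p ≤ 1/2)
    (a b y : ℝ) (hb : 0 ≤ b) (hab : b ≤ a)
    (U : Ω → ℝ) (hU : Measurable U) (hUd : μ.map U = volume.restrict (Set.Ioo 0 1))
    (qX qY : ℝ → ℝ)
    (hqX : qX = fun u => if u ≤ p then -(1 - p) * a else p * a)
    (hqY : qY = fun u => if u ≤ 1 - p then -p * b + y else (1 - p) * b + y)
    (X1 Y1 Y2 : Ω → ℝ)
    (hX1 : X1 = fun ω => qX (U ω)) (hY1 : Y1 = fun ω => qY (U ω))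
    (hY2 : Y2 = fun ω => qY (1 - U ω)) :
    (∫ ω, (X1 ω + Y1 ω) ∂μ) = y ∧ (∫ ω, (X1 ω + Y2 ω) ∂μ) = y ∧
    ES μ (fun ω => X1 ω + Y1 ω) p = p * (a - b) + p * b / (1 - p) + y ∧
    ES μ (fun ω => X1 ω + Y2 ω) p = p * (a - b) + y := by
  have hp1 : p < 1 := lt_of_le_of_lt hp2 (by norm_num)
  have hp1' : (0:ℝ) < 1 - p := by linarith
  have ha : 0 ≤ a := le_trans hb hab
  set g1 : ℝ → ℝ := fun u =>
    (if u ≤ p then -(1 - p) * a else p * a) +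
    (if u ≤ 1 - p then -p * b + y else (1 - p) * b + y) with hg1
  set g2 : ℝ → ℝ := fun u =>
    (if u ≤ p then -(1 - p) * a else p * a) +
    (if 1 - u ≤ 1 - p then -p * b + y else (1 - p) * b + y) with hg2
  have hqXm : Measurable (fun u : ℝ => if u ≤ p then -(1 - p) * a else p * a) :=
    measurable_const.ite measurableSet_Iic measurable_const
  have hqYm : Measurable (fun u : ℝ => if u ≤ 1 - p then -p * b + y else (1 - p) * b + y) :=
    measurable_const.ite measurableSet_Iic measurable_const
  have hg1m : Measurable g1 := hqXm.add hqYm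
  have hg2m : Measurable g2 := by
    apply hqXm.add
    exact hqYm.comp (measurable_const.sub measurable_id)
  have hZ1 : (fun ω => X1 ω + Y1 ω) = fun ω => g1 (U ω) := by
    funext ω; rw [hX1, hY1, hqX, hqY]
  have hZ2 : (fun ω => X1 ω + Y2 ω) = fun ω => g2 (U ω) := by
    funext ω; rw [hX1, hY2, hqX, hqY]
  -- pushforward identity
  have hmap : ∀ S : Set ℝ, MeasurableSet S → μ (U ⁻¹' S) = volume (S ∩ Set.Ioo 0 1) := by
    intro S hS
    rw [← Measure.map_apply hU hS, hUd, Measure.restrict_apply hS]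
  have hint : ∀ g : ℝ → ℝ, Measurable g →
      ∫ ω, g (U ω) ∂μ = ∫ u in Set.Ioo (0:ℝ) 1, g u := by
    intro g hg
    rw [← integral_map hU.aemeasurable hg.aestronglyMeasurable, hUd]
  have hFle : ∀ (T : Set ℝ) (c : ℝ), MeasurableSet T → 0 ≤ c →
      (T ∩ Set.Ioo 0 1 ⊆ Set.Ioc 0 c) → (μ (U ⁻¹' T)).toReal ≤ c := by
    intro T c hT hc hsub
    rw [hmap T hT]
    calc (volume (T ∩ Set.Ioo 0 1)).toReal ≤ (volume (Set.Ioc (0:ℝ) c)).toReal :=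
          ENNReal.toReal_mono (by rw [Real.volume_Ioc]; exact ENNReal.ofReal_ne_top)
            (measure_mono hsub)
      _ = c := by rw [Real.volume_Ioc, ENNReal.toReal_ofReal (by linarith)]; ring
  have hFge : ∀ (T : Set ℝ) (c : ℝ), MeasurableSet T → 0 ≤ c →
      (Set.Ioo 0 c ⊆ T ∩ Set.Ioo 0 1) → c ≤ (μ (U ⁻¹' T)).toReal := by
    intro T c hT hc hsub
    rw [hmap T hT]
    have hne : volume (T ∩ Set.Ioo 0 1) ≠ ⊤ := by
      refine ne_of_lt (lt_of_le_of_lt (measure_mono Set.inter_subset_right) ?_)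
      rw [Real.volume_Ioo]; exact ENNReal.ofReal_lt_top
    calc c = (volume (Set.Ioo (0:ℝ) c)).toReal := by
          rw [Real.volume_Ioo, ENNReal.toReal_ofReal (by linarith)]; ring
      _ ≤ _ := ENNReal.toReal_mono hne (measure_mono hsub)
  -- means
  have hmean1 : (∫ ω, (X1 ω + Y1 ω) ∂μ) = y := by
    rw [hZ1, hint g1 hg1m, hg1,
      integral_add (step_integrableOn 0 1 p _ _) (step_integrableOn 0 1 (1-p) _ _),
      step_intOn 0 p 1 _ _ hp0.le hp1, step_intOn 0 (1-p) 1 _ _ (by linarith) (by linarith)]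
    ring
  have hmean2 : (∫ ω, (X1 ω + Y2 ω) ∂μ) = y := by
    rw [hZ2, hint g2 hg2m]
    have hae : ∀ᵐ u ∂(volume.restrict (Set.Ioo (0:ℝ) 1)),
        g2 u = (fun u => if u ≤ p then -(1-p)*a + ((1-p)*b + y) else p*a + (-p*b + y)) u := by
      apply ae_restrict_of_ae
      rw [ae_iff]
      refine measure_mono_null (fun u hu => ?_) (Real.volume_singleton (a := p))
      simp only [Set.mem_setOf_eq] at hu
      by_contra hne
      apply hu
      rcases lt_trichotomy u p with h | h | h
      · rw [hg2]
        simp only []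
        rw [if_pos h.le, if_neg (by linarith), if_pos h.le]
      · exact absurd h hne
      · rw [hg2]
        simp only []
        rw [if_neg (not_le.mpr h), if_pos (by linarith), if_neg (not_le.mpr h)]
    rw [integral_congr_ae hae, step_intOn 0 p 1 _ _ hp0.le hp1]
    ring
  -- VaR for Z1
  have hVaR1 : ∀ s ∈ Set.Ioo p 1, VaR μ (fun ω => g1 (U ω)) s =
      if s ≤ 1 - p then p*a + (-p*b + y) else p*a + ((1-p)*b + y) := by
    rintro s ⟨hs1, hs2⟩
    rcases le_or_gt s (1-p) with hsp | hsp
    · rw [if_pos hsp]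
      apply VaR_eq_of μ _ hs1
      · intro x hx
        apply hFle {u | g1 u ≤ x} p (hg1m measurableSet_Iic) hp0.le
        rintro u ⟨hux, hu0, hu1⟩
        refine ⟨hu0, ?_⟩
        by_contra h
        push_neg at h
        simp only [hg1, Set.mem_setOf_eq, if_neg (not_le.mpr h)] at hux
        split_ifs at hux <;> nlinarith
      · intro x hx
        refine le_trans hsp (hFge {u | g1 u ≤ x} (1-p) (hg1m measurableSet_Iic) (by linarith) ?_)
        rintro u ⟨hu0, hu1⟩
        refine ⟨?_, hu0, by linarith⟩
        simp only [hg1, Set.mem_setOf_eq, if_pos (le_of_lt hu1)]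
        split_ifs <;> nlinarith
    · rw [if_neg (not_le.mpr hsp)]
      apply VaR_eq_of μ _ hsp
      · intro x hx
        apply hFle {u | g1 u ≤ x} (1-p) (hg1m measurableSet_Iic) (by linarith)
        rintro u ⟨hux, hu0, hu1⟩
        refine ⟨hu0, ?_⟩
        by_contra h
        push_neg at h
        simp only [hg1, Set.mem_setOf_eq, if_neg (not_le.mpr h),
          if_neg (not_le.mpr (lt_of_le_of_lt (by linarith : p ≤ 1-p) h))] at hux
        nlinarith
      · intro x hx
        refine le_trans hs2.le (hFge {u | g1 u ≤ x} 1 (hg1m measurableSet_Iic) zero_le_one ?_)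
        rintro u ⟨hu0, hu1⟩
        refine ⟨?_, hu0, hu1⟩
        simp only [hg1, Set.mem_setOf_eq]
        split_ifs <;> nlinarith
  -- VaR for Z2
  have hVaR2 : ∀ s ∈ Set.Ioo p 1, VaR μ (fun ω => g2 (U ω)) s = p*a + (-p*b + y) := by
    rintro s ⟨hs1, hs2⟩
    apply VaR_eq_of μ _ hs1
    · intro x hx
      apply hFle {u | g2 u ≤ x} p (hg2m measurableSet_Iic) hp0.le
      rintro u ⟨hux, hu0, hu1⟩
      refine ⟨hu0, ?_⟩
      by_contra h
      push_neg at h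
      simp only [hg2, Set.mem_setOf_eq, if_neg (not_le.mpr h),
        if_pos (by linarith : 1 - u ≤ 1 - p)] at hux
      linarith
    · intro x hx
      refine le_trans hs2.le (hFge {u | g2 u ≤ x} 1 (hg2m measurableSet_Iic) zero_le_one ?_)
      rintro u ⟨hu0, hu1⟩
      refine ⟨?_, hu0, hu1⟩
      simp only [hg2, Set.mem_setOf_eq]
      split_ifs <;> nlinarith
  -- ES computations
  have hES1 : ES μ (fun ω => X1 ω + Y1 ω) p = p * (a - b) + p * b / (1 - p) + y := by
    rw [hZ1, ES, setIntegral_congr_fun measurableSet_Ioo hVaR1,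
      step_intOn p (1-p) 1 _ _ (by linarith) (by linarith)]
    field_simp
    ring
  have hES2 : ES μ (fun ω => X1 ω + Y2 ω) p = p * (a - b) + y := by
    rw [hZ2, ES, setIntegral_congr_fun measurableSet_Ioo hVaR2, setIntegral_const,
      Real.volume_real_Ioo_of_le hp1.le, smul_eq_mul]
    field_simp
    ring
  exact ⟨hmean1, hmean2, hES1, hES2⟩
end
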